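/- arXiv:2012.07705 — 2 statements merged into one kernel-verified Lean document; each statement's English description precedes it below -/
import Mathlib

section
/- Let (x, t) ∈ ℝ^d × [0, T) satisfy V(x, t) < ψ(x, t). Then there exists t₀ = t₀(x, t) > 0 such that for every ζ ∈ [t, t + t₀], V(x, t) = inf over α ∈ 𝒜 of [∫_t^ζ e^{−λ(s−t)} ℓ(y_{(x,t)}(s;α), α(s), s) ds + e^{−λ(ζ−t)} V(y_{(x,t)}(ζ;α), ζ)]. -/
open Set MeasureTheory intervalIntegral RealInnerProductSpace

noncomputable section

/-- The set of admissible (measurable, `A`-valued) controls. -/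
def Ctrl {m : ℕ} (A : Set (EuclideanSpace ℝ (Fin m))) : Set (ℝ → EuclideanSpace ℝ (Fin m)) :=
  {α | Measurable α ∧ ∀ s, α s ∈ A}

/-- The cost functional of the time-dependent optimal stopping problem:
`J(x,t,α,τ) = ∫_t^τ e^{−λ(s−t)} ℓ(y(s),α(s),s) ds + e^{−λ(τ−t)} ψ(y(τ),τ)`,
where `Y x t α` denotes the trajectory of `y' = f(y,α)`, `y(t)=x`. -/
def costJ {d m : ℕ}
    (ℓ : EuclideanSpace ℝ (Fin d) → EuclideanSpace ℝ (Fin m) → ℝ → ℝ)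
    (ψ : EuclideanSpace ℝ (Fin d) → ℝ → ℝ) (lam : ℝ)
    (Y : EuclideanSpace ℝ (Fin d) → ℝ → (ℝ → EuclideanSpace ℝ (Fin m)) → ℝ →
      EuclideanSpace ℝ (Fin d))
    (x : EuclideanSpace ℝ (Fin d)) (t : ℝ) (α : ℝ → EuclideanSpace ℝ (Fin m)) (τ : ℝ) : ℝ :=
  (∫ s in t..τ, Real.exp (-lam * (s - t)) * ℓ (Y x t α s) (α s) s)
    + Real.exp (-lam * (τ - t)) * ψ (Y x t α τ) τ

/-- The Hamiltonian `H(x,t,ξ) = sup_{a ∈ A} {−f(x,a)·ξ − ℓ(x,a,t)}`. -/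
def Ham {d m : ℕ} (A : Set (EuclideanSpace ℝ (Fin m)))
    (f : EuclideanSpace ℝ (Fin d) → EuclideanSpace ℝ (Fin m) → EuclideanSpace ℝ (Fin d))
    (ℓ : EuclideanSpace ℝ (Fin d) → EuclideanSpace ℝ (Fin m) → ℝ → ℝ)
    (x : EuclideanSpace ℝ (Fin d)) (t : ℝ) (ξ : EuclideanSpace ℝ (Fin d)) : ℝ :=
  sSup ((fun a => -⟪f x a, ξ⟫ - ℓ x a t) '' A)

/-- `u` is bounded and uniformly continuous on `ℝ^d × [0,T]`. -/
def BUCOn {d : ℕ} (u : EuclideanSpace ℝ (Fin d) → ℝ → ℝ) (T : ℝ) : Prop :=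
  (∃ K, ∀ x t, t ∈ Icc (0 : ℝ) T → |u x t| ≤ K) ∧
    UniformContinuousOn (fun q : EuclideanSpace ℝ (Fin d) × ℝ => u q.1 q.2)
      (univ ×ˢ Icc (0 : ℝ) T)

/-- Viscosity subsolution of `−u_t + λu + H(x,t,D_x u) = 0` on a set `S` (via `C¹` test
functions touching `u` from above). -/
def SubSolOn {d : ℕ} (S : Set (EuclideanSpace ℝ (Fin d) × ℝ)) (lam : ℝ)
    (H : EuclideanSpace ℝ (Fin d) → ℝ → EuclideanSpace ℝ (Fin d) → ℝ)
    (u : EuclideanSpace ℝ (Fin d) → ℝ → ℝ) : Prop :=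
  ∀ φ : EuclideanSpace ℝ (Fin d) × ℝ → ℝ, ContDiff ℝ 1 φ →
    ∀ x t, (x, t) ∈ S →
      IsLocalMaxOn (fun q : EuclideanSpace ℝ (Fin d) × ℝ => u q.1 q.2 - φ q) S (x, t) →
      -(deriv (fun s => φ (x, s)) t) + lam * u x t
          + H x t (gradient (fun z => φ (z, t)) x) ≤ 0

/-- Viscosity supersolution of `−u_t + λu + H(x,t,D_x u) = 0` on a set `S`. -/
def SuperSolOn {d : ℕ} (S : Set (EuclideanSpace ℝ (Fin d) × ℝ)) (lam : ℝ)
    (H : EuclideanSpace ℝ (Fin d) → ℝ → EuclideanSpace ℝ (Fin d) → ℝ)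
    (u : EuclideanSpace ℝ (Fin d) → ℝ → ℝ) : Prop :=
  ∀ φ : EuclideanSpace ℝ (Fin d) × ℝ → ℝ, ContDiff ℝ 1 φ →
    ∀ x t, (x, t) ∈ S →
      IsLocalMinOn (fun q : EuclideanSpace ℝ (Fin d) × ℝ => u q.1 q.2 - φ q) S (x, t) →
      0 ≤ -(deriv (fun s => φ (x, s)) t) + lam * u x t
          + H x t (gradient (fun z => φ (z, t)) x)

/-- Viscosity subsolution of the obstacle problem
`max{u − ψ, −u_t + λu + H(x,t,D_x u)} = 0` on `ℝ^d × [0,T)`. -/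
def ObSubSol {d : ℕ} (T lam : ℝ)
    (ψ : EuclideanSpace ℝ (Fin d) → ℝ → ℝ)
    (H : EuclideanSpace ℝ (Fin d) → ℝ → EuclideanSpace ℝ (Fin d) → ℝ)
    (u : EuclideanSpace ℝ (Fin d) → ℝ → ℝ) : Prop :=
  ∀ φ : EuclideanSpace ℝ (Fin d) × ℝ → ℝ, ContDiff ℝ 1 φ →
    ∀ x t, t ∈ Ico (0 : ℝ) T →
      IsLocalMaxOn (fun q : EuclideanSpace ℝ (Fin d) × ℝ => u q.1 q.2 - φ q)
        (univ ×ˢ Ico (0 : ℝ) T) (x, t) →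
      max (u x t - ψ x t)
        (-(deriv (fun s => φ (x, s)) t) + lam * u x t
          + H x t (gradient (fun z => φ (z, t)) x)) ≤ 0

/-- Viscosity supersolution of the obstacle problem
`max{u − ψ, −u_t + λu + H(x,t,D_x u)} = 0` on `ℝ^d × [0,T)`. -/
def ObSuperSol {d : ℕ} (T lam : ℝ)
    (ψ : EuclideanSpace ℝ (Fin d) → ℝ → ℝ)
    (H : EuclideanSpace ℝ (Fin d) → ℝ → EuclideanSpace ℝ (Fin d) → ℝ)
    (u : EuclideanSpace ℝ (Fin d) → ℝ → ℝ) : Prop :=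
  ∀ φ : EuclideanSpace ℝ (Fin d) × ℝ → ℝ, ContDiff ℝ 1 φ →
    ∀ x t, t ∈ Ico (0 : ℝ) T →
      IsLocalMinOn (fun q : EuclideanSpace ℝ (Fin d) × ℝ => u q.1 q.2 - φ q)
        (univ ×ˢ Ico (0 : ℝ) T) (x, t) →
      0 ≤ max (u x t - ψ x t)
        (-(deriv (fun s => φ (x, s)) t) + lam * u x t
          + H x t (gradient (fun z => φ (z, t)) x))

/-- Viscosity solution of the obstacle problem with terminal condition `u(·,T) = ψ(·,T)`. -/
def ObSolution {d : ℕ} (T lam : ℝ)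
    (ψ : EuclideanSpace ℝ (Fin d) → ℝ → ℝ)
    (H : EuclideanSpace ℝ (Fin d) → ℝ → EuclideanSpace ℝ (Fin d) → ℝ)
    (u : EuclideanSpace ℝ (Fin d) → ℝ → ℝ) : Prop :=
  ObSubSol T lam ψ H u ∧ ObSuperSol T lam ψ H u ∧ ∀ x, u x T = ψ x T


section Helpers
open Filter
variable {d m : ℕ}

lemma gronwall_zero (t₀ b L' : ℝ) (hL' : 0 ≤ L') (h : ℝ → ℝ)
    (hc : ContinuousOn h (Icc t₀ b)) (h0 : ∀ s ∈ Icc t₀ b, 0 ≤ h s)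
    (hb : ∀ s ∈ Icc t₀ b, h s ≤ L' * ∫ r in t₀..s, h r) :
    ∀ s ∈ Icc t₀ b, h s = 0 := by
  rcases le_or_gt t₀ b with hab | hab
  · -- extend h continuously to ℝ
    let g : ℝ → ℝ := fun s => h (max t₀ (min s b))
    have hgc : Continuous g := by
      have hcont : Continuous fun s : ℝ => max t₀ (min s b) :=
        continuous_const.max (continuous_id.min continuous_const)
      refine hc.comp_continuous hcont ?_
      intro s; exact ⟨le_max_left _ _, max_le hab (min_le_right _ _)⟩
    have hgeq : ∀ s ∈ Icc t₀ b, g s = h s := by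
      intro s hs
      show h (max t₀ (min s b)) = h s
      rw [min_eq_left hs.2, max_eq_right hs.1]
    have hgint : ∀ s ∈ Icc t₀ b, (∫ r in t₀..s, g r) = ∫ r in t₀..s, h r := by
      intro s hs
      refine integral_congr fun r hr => hgeq r ?_
      rw [uIcc_of_le hs.1] at hr
      exact ⟨hr.1, hr.2.trans hs.2⟩
    let φ : ℝ → ℝ := fun s => ∫ r in t₀..s, g r
    have hφd : ∀ s, HasDerivAt φ (g s) s := fun s =>
      intervalIntegral.integral_hasDerivAt_right (hgc.intervalIntegrable _ _)
        (hgc.stronglyMeasurableAtFilter _ _) hgc.continuousAt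
    let Φ : ℝ → ℝ := fun s => Real.exp (-L' * s) * φ s
    have hΦd : ∀ s, HasDerivAt Φ
        (Real.exp (-L' * s) * (g s - L' * φ s)) s := by
      intro s
      have h1 : HasDerivAt (fun u : ℝ => Real.exp (-L' * u)) (-L' * Real.exp (-L' * s)) s := by
        have h2 : HasDerivAt (fun u : ℝ => -L' * u) (-L') s := by
          simpa using (hasDerivAt_id s).const_mul (-L')
        have := (Real.hasDerivAt_exp (-L' * s)).comp s h2
        exact this.congr_deriv (by ring)
      have := h1.mul (hφd s)
      exact this.congr_deriv (by ring)
    have hanti : AntitoneOn Φ (Icc t₀ b) := by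
      apply antitoneOn_of_deriv_nonpos (convex_Icc t₀ b)
      · exact fun s _ => (hΦd s).continuousAt.continuousWithinAt
      · intro s hs
        exact ((hΦd s).differentiableAt.differentiableWithinAt)
      · intro s hs
        rw [interior_Icc] at hs
        have hs' : s ∈ Icc t₀ b := Ioo_subset_Icc_self hs
        rw [(hΦd s).deriv]
        have hgs : g s ≤ L' * φ s := by
          rw [hgeq s hs']
          show h s ≤ L' * ∫ r in t₀..s, g r
          rw [hgint s hs']
          exact hb s hs'
        have : g s - L' * φ s ≤ 0 := by linarith
        exact mul_nonpos_of_nonneg_of_nonpos (Real.exp_pos _).le this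
    have hφ0 : ∀ s ∈ Icc t₀ b, φ s ≤ 0 := by
      intro s hs
      have h1 : Φ s ≤ Φ t₀ := hanti (left_mem_Icc.2 hab) hs hs.1
      have h2 : Φ t₀ = 0 := by
        show Real.exp (-L' * t₀) * (∫ r in t₀..t₀, g r) = 0
        simp
      rw [h2] at h1
      have h3 : Real.exp (-L' * s) * φ s ≤ 0 := h1
      have h4 := Real.exp_pos (-L' * s)
      nlinarith
    intro s hs
    have hφnn : 0 ≤ φ s := by
      show 0 ≤ ∫ r in t₀..s, g r
      rw [hgint s hs]
      exact intervalIntegral.integral_nonneg hs.1 fun u hu => h0 u ⟨hu.1, hu.2.trans hs.2⟩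
    have hle : h s ≤ 0 := by
      have h5 := hb s hs
      have hφz : φ s = 0 := le_antisymm (hφ0 s hs) hφnn
      have h6 : (∫ r in t₀..s, h r) = 0 := by
        rw [← hgint s hs]; exact hφz
      rw [h6] at h5
      linarith
    exact le_antisymm hle (h0 s hs)
  · intro s hs; exact absurd (hs.1.trans hs.2) (not_le.2 hab)

lemma traj_basic
    (f : EuclideanSpace ℝ (Fin d) → EuclideanSpace ℝ (Fin m) → EuclideanSpace ℝ (Fin d))
    (hfc : Continuous fun q : EuclideanSpace ℝ (Fin d) × EuclideanSpace ℝ (Fin m) =>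
      f q.1 q.2)
    (M : ℝ) (hfM : ∀ x a, ‖f x a‖ ≤ M)
    (α : ℝ → EuclideanSpace ℝ (Fin m)) (hα : Measurable α)
    (Z : ℝ → EuclideanSpace ℝ (Fin d)) (x : EuclideanSpace ℝ (Fin d)) (t : ℝ)
    (hZ : ∀ s, Z s = x + ∫ r in t..s, f (Z r) (α r)) :
    (∀ s, t ≤ s → IntegrableOn (fun r => f (Z r) (α r)) (Ioc t s) volume) ∧
      ContinuousOn Z (Ici t) := by
  set g : ℝ → EuclideanSpace ℝ (Fin d) := fun r => f (Z r) (α r) with hg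
  have hgM : ∀ r, ‖g r‖ ≤ M := fun r => hfM _ _
  -- continuity within from integrability
  have key_cont : ∀ u, t ≤ u → IntegrableOn g (Ioc t u) volume →
      ContinuousOn Z (Icc t u) := by
    intro u htu hint
    have hint' : IntegrableOn g (Icc t u) volume := by
      rwa [integrableOn_Icc_iff_integrableOn_Ioc]
    have hprim := continuousOn_primitive (f := g) (μ := volume) (a := t) (b := u) hint'
    have : ContinuousOn (fun s => x + ∫ r in Ioc t s, g r) (Icc t u) :=
      continuousOn_const.add hprim
    refine this.congr fun s hs => ?_
    rw [hZ s, intervalIntegral.integral_of_le hs.1]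
  -- main integrability claim
  have main : ∀ s, t ≤ s → IntegrableOn g (Ioc t s) volume := by
    by_contra hcon
    push_neg at hcon
    obtain ⟨S, htS, hSbad⟩ := hcon
    set Bad : Set ℝ := {s | t ≤ s ∧ ¬ IntegrableOn g (Ioc t s) volume} with hBad
    have hSBad : S ∈ Bad := ⟨htS, hSbad⟩
    have hBadne : Bad.Nonempty := ⟨S, hSBad⟩
    have hBadlb : ∀ s ∈ Bad, t ≤ s := fun s hs => hs.1
    have hbdd : BddBelow Bad := ⟨t, hBadlb⟩
    set c : ℝ := sInf Bad with hc
    have htc : t ≤ c := le_csInf hBadne hBadlb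
    have hupward : ∀ s ∈ Bad, ∀ s', s ≤ s' → s' ∈ Bad := by
      intro s hs s' hss'
      refine ⟨hs.1.trans hss', fun hint => hs.2 (hint.mono_set ?_)⟩
      exact Ioc_subset_Ioc le_rfl hss'
    have hbadIoi : ∀ s, c < s → s ∈ Bad := by
      intro s hcs
      obtain ⟨b', hb'Bad, hb's⟩ := exists_lt_of_csInf_lt hBadne hcs
      exact hupward b' hb'Bad s hb's.le
    have hgood : ∀ s, t ≤ s → s < c → IntegrableOn g (Ioc t s) volume := by
      intro s hts hsc
      by_contra hbad
      exact absurd (csInf_le hbdd ⟨hts, hbad⟩) (not_le.2 hsc)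
    have hcS : c ≤ S := csInf_le hbdd hSBad
    -- Z is continuous on Ico t c
    have hZcont : ContinuousOn Z (Ico t c) := by
      intro s hs
      have hu : s < (s + c) / 2 ∧ (s + c) / 2 < c := ⟨by linarith [hs.2], by linarith [hs.2]⟩
      have hcont := key_cont ((s + c) / 2) (hs.1.trans hu.1.le)
        (hgood _ (hs.1.trans hu.1.le) hu.2)
      have h1 : ContinuousWithinAt Z (Icc t ((s + c) / 2)) s :=
        hcont s ⟨hs.1, hu.1.le⟩
      refine h1.mono_of_mem_nhdsWithin ?_
      rw [mem_nhdsWithin]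
      exact ⟨Iio ((s + c) / 2), isOpen_Iio, hu.1,
        fun y hy => ⟨hy.2.1, hy.1.le⟩⟩
    -- Z = x beyond c
    have hZx : ∀ s, c < s → Z s = x := by
      intro s hcs
      have hsBad := hbadIoi s hcs
      rw [hZ s, intervalIntegral.integral_of_le hsBad.1, integral_undef hsBad.2]
      simp
    -- a.e. strong measurability of g on Ioc t S
    have hm1 : AEStronglyMeasurable g (volume.restrict (Ico t c)) := by
      have hZm : AEStronglyMeasurable Z (volume.restrict (Ico t c)) :=
        hZcont.aestronglyMeasurable measurableSet_Ico
      exact hfc.comp_aestronglyMeasurable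
        (hZm.prodMk (hα.aestronglyMeasurable.mono_measure Measure.restrict_le_self))
    have hm2 : AEStronglyMeasurable g (volume.restrict (Ioi c)) := by
      have hv : AEStronglyMeasurable (fun r => f x (α r)) (volume.restrict (Ioi c)) :=
        (hfc.measurable.comp (measurable_const.prodMk hα)).aestronglyMeasurable
      refine hv.congr ?_
      refine (ae_restrict_iff' measurableSet_Ioi).2 (Eventually.of_forall fun r hr => ?_)
      rw [hg]
      simp only
      rw [hZx r hr]
    have hm : AEStronglyMeasurable g (volume.restrict (Ioc t S)) := by
      have hsub : Ioc t S \ {c} ⊆ Ico t c ∪ Ioi c := by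
        intro r hr
        obtain ⟨hr1, hrc⟩ := hr
        have hne : r ≠ c := by simpa using hrc
        rcases hne.lt_or_gt with h | h
        · exact Or.inl ⟨hr1.1.le, h⟩
        · exact Or.inr h
      have hae' : (Ioc t S \ {c} : Set ℝ) =ᵐ[volume] Ioc t S :=
        diff_ae_eq_self.2 (measure_mono_null inter_subset_right (measure_singleton c))
      have hae : (Ioc t S : Set ℝ) =ᵐ[volume] (Ioc t S \ {c} : Set ℝ) := hae'.symm
      have h1 : AEStronglyMeasurable g (volume.restrict (Ico t c) + volume.restrict (Ioi c)) :=
        hm1.add_measure hm2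
      have h2 : AEStronglyMeasurable g (volume.restrict (Ico t c ∪ Ioi c)) :=
        h1.mono_measure (Measure.restrict_union_le _ _)
      have h3 : AEStronglyMeasurable g (volume.restrict (Ioc t S \ {c})) :=
        h2.mono_measure (Measure.restrict_mono hsub le_rfl)
      rwa [← Measure.restrict_congr_set hae] at h3
    -- integrability on Ioc t S : contradiction
    refine hSbad ?_
    refine Integrable.mono' (g := fun _ => M) ?_ hm (Eventually.of_forall fun r => hgM r)
    exact integrableOn_const measure_Ioc_lt_top.ne
  refine ⟨main, ?_⟩
  intro s hs
  have h1 : ContinuousWithinAt Z (Icc t (s + 1)) s :=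
    key_cont (s + 1) (hs.trans (by linarith)) (main _ (hs.trans (by linarith))) s
      ⟨hs, by linarith⟩
  refine h1.mono_of_mem_nhdsWithin ?_
  rw [mem_nhdsWithin]
  exact ⟨Iio (s + 1), isOpen_Iio, by simp, fun y hy => ⟨hy.2, hy.1.le⟩⟩

lemma traj_unique (A : Set (EuclideanSpace ℝ (Fin m)))
    (f : EuclideanSpace ℝ (Fin d) → EuclideanSpace ℝ (Fin m) → EuclideanSpace ℝ (Fin d))
    (L : ℝ) (hfLip : ∀ x y a, a ∈ A → ‖f x a - f y a‖ ≤ L * ‖x - y‖)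
    (β γ : ℝ → EuclideanSpace ℝ (Fin m)) (hβA : ∀ r, β r ∈ A)
    (Z W : ℝ → EuclideanSpace ℝ (Fin d)) (t₀ b : ℝ)
    (hint1 : IntegrableOn (fun r => f (Z r) (β r)) (Ioc t₀ b) volume)
    (hint2 : IntegrableOn (fun r => f (W r) (γ r)) (Ioc t₀ b) volume)
    (hZ : ∀ s ∈ Icc t₀ b, Z s = Z t₀ + ∫ r in t₀..s, f (Z r) (β r))
    (hW : ∀ s ∈ Icc t₀ b, W s = W t₀ + ∫ r in t₀..s, f (W r) (γ r))
    (h0 : Z t₀ = W t₀)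
    (hagree : ∀ r ∈ Ico t₀ b, β r = γ r) :
    ∀ s ∈ Icc t₀ b, Z s = W s := by
  rcases le_or_gt t₀ b with hab | hab
  swap
  · intro s hs; exact absurd (hs.1.trans hs.2) (not_le.2 hab)
  -- interval integrability of the two vector fields on subintervals
  have hii1 : ∀ s ∈ Icc t₀ b, IntervalIntegrable (fun r => f (Z r) (β r)) volume t₀ s := by
    intro s hs
    rw [intervalIntegrable_iff_integrableOn_Ioc_of_le hs.1]
    exact hint1.mono_set (Ioc_subset_Ioc le_rfl hs.2)
  have hii2 : ∀ s ∈ Icc t₀ b, IntervalIntegrable (fun r => f (W r) (γ r)) volume t₀ s := by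
    intro s hs
    rw [intervalIntegrable_iff_integrableOn_Ioc_of_le hs.1]
    exact hint2.mono_set (Ioc_subset_Ioc le_rfl hs.2)
  -- continuity of Z and W on Icc t₀ b
  have hcontZ : ContinuousOn Z (Icc t₀ b) := by
    have hint' : IntegrableOn (fun r => f (Z r) (β r)) (Icc t₀ b) volume := by
      rwa [integrableOn_Icc_iff_integrableOn_Ioc]
    have := (continuousOn_const (c := Z t₀)).add (continuousOn_primitive hint')
    refine this.congr fun s hs => ?_
    rw [hZ s hs, intervalIntegral.integral_of_le hs.1]
    rfl
  have hcontW : ContinuousOn W (Icc t₀ b) := by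
    have hint' : IntegrableOn (fun r => f (W r) (γ r)) (Icc t₀ b) volume := by
      rwa [integrableOn_Icc_iff_integrableOn_Ioc]
    have := (continuousOn_const (c := W t₀)).add (continuousOn_primitive hint')
    refine this.congr fun s hs => ?_
    rw [hW s hs, intervalIntegral.integral_of_le hs.1]
    rfl
  set h : ℝ → ℝ := fun s => ‖Z s - W s‖ with hh
  have hcont : ContinuousOn h (Icc t₀ b) := (hcontZ.sub hcontW).norm
  have hkey : ∀ s ∈ Icc t₀ b, h s ≤ (max L 0) * ∫ r in t₀..s, h r := by
    intro s hs
    have hdiff : Z s - W s = ∫ r in t₀..s, (f (Z r) (β r) - f (W r) (γ r)) := by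
      rw [hZ s hs, hW s hs, h0]
      rw [intervalIntegral.integral_sub (hii1 s hs) (hii2 s hs)]
      abel
    have h1 : h s ≤ ∫ r in t₀..s, ‖f (Z r) (β r) - f (W r) (γ r)‖ := by
      rw [hh]; simp only
      rw [hdiff]
      exact intervalIntegral.norm_integral_le_integral_norm hs.1
    have h2 : (∫ r in t₀..s, ‖f (Z r) (β r) - f (W r) (γ r)‖)
        ≤ ∫ r in t₀..s, (max L 0) * h r := by
      have hfint : IntervalIntegrable
          (fun r => ‖f (Z r) (β r) - f (W r) (γ r)‖) volume t₀ s :=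
        ((hii1 s hs).sub (hii2 s hs)).norm
      have hgint : IntervalIntegrable (fun r => (max L 0) * h r) volume t₀ s := by
        refine ContinuousOn.intervalIntegrable ?_
        rw [uIcc_of_le hs.1]
        exact (continuousOn_const.mul (hcont.mono (Icc_subset_Icc le_rfl hs.2)))
      refine intervalIntegral.integral_mono_ae_restrict hs.1 hfint hgint ?_
      have hbne : ∀ᵐ r ∂(volume.restrict (Icc t₀ s)), r ≠ b := by
        refine ae_restrict_of_ae ?_
        have : (volume : Measure ℝ) {b} = 0 := measure_singleton b
        rw [ae_iff]
        simpa using this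
      filter_upwards [ae_restrict_mem measurableSet_Icc, hbne] with r hr hrb
      have hrb' : r < b := lt_of_le_of_ne (hr.2.trans hs.2) hrb
      have hβγ : β r = γ r := hagree r ⟨hr.1, hrb'⟩
      rw [← hβγ]
      calc ‖f (Z r) (β r) - f (W r) (β r)‖ ≤ L * ‖Z r - W r‖ :=
            hfLip _ _ _ (hβA r)
        _ ≤ (max L 0) * h r := by
            exact mul_le_mul_of_nonneg_right (le_max_left _ _) (norm_nonneg _)
    calc h s ≤ ∫ r in t₀..s, ‖f (Z r) (β r) - f (W r) (γ r)‖ := h1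
      _ ≤ ∫ r in t₀..s, (max L 0) * h r := h2
      _ = (max L 0) * ∫ r in t₀..s, h r := by
          rw [intervalIntegral.integral_const_mul]
  have hzero := gronwall_zero t₀ b (max L 0) (le_max_right _ _) h hcont
    (fun s _ => norm_nonneg _) hkey
  intro s hs
  have := hzero s hs
  rw [hh] at this
  simpa [sub_eq_zero] using this

lemma integrand_integrable
    (ℓ : EuclideanSpace ℝ (Fin d) → EuclideanSpace ℝ (Fin m) → ℝ → ℝ)
    (hℓ0 : ∀ x a s, 0 ≤ ℓ x a s) (hℓb : ∃ K, ∀ x a s, ℓ x a s ≤ K)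
    (hℓc : Continuous fun q : EuclideanSpace ℝ (Fin d) × EuclideanSpace ℝ (Fin m) × ℝ =>
      ℓ q.1 q.2.1 q.2.2)
    (lam : ℝ) (α : ℝ → EuclideanSpace ℝ (Fin m)) (hα : Measurable α)
    (Z : ℝ → EuclideanSpace ℝ (Fin d)) (t : ℝ) (hZc : ContinuousOn Z (Ici t))
    (c u v : ℝ) (htu : t ≤ u) (huv : u ≤ v) :
    IntervalIntegrable (fun s => Real.exp (-lam * (s - c)) * ℓ (Z s) (α s) s) volume u v := by
  obtain ⟨K, hK⟩ := hℓb
  rw [intervalIntegrable_iff_integrableOn_Ioc_of_le huv]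
  have hZm : AEStronglyMeasurable Z (volume.restrict (Ioc u v)) :=
    (hZc.mono fun r hr => le_trans htu hr.1.le).aestronglyMeasurable measurableSet_Ioc
  have hm : AEStronglyMeasurable
      (fun s => Real.exp (-lam * (s - c)) * ℓ (Z s) (α s) s)
      (volume.restrict (Ioc u v)) := by
    have h1 : AEStronglyMeasurable (fun s : ℝ => Real.exp (-lam * (s - c)))
        (volume.restrict (Ioc u v)) :=
      (Real.continuous_exp.comp (by continuity)).aestronglyMeasurable
    have h2 : AEStronglyMeasurable (fun s => ℓ (Z s) (α s) s)
        (volume.restrict (Ioc u v)) := by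
      have hpair : AEStronglyMeasurable
          (fun s : ℝ => (Z s, α s, s))
          (volume.restrict (Ioc u v)) :=
        hZm.prodMk ((hα.aestronglyMeasurable.mono_measure Measure.restrict_le_self).prodMk
          aestronglyMeasurable_id)
      exact hℓc.comp_aestronglyMeasurable hpair
    exact h1.mul h2
  refine Integrable.mono'
    (g := fun _ => Real.exp (|lam| * (|u| + |v| + |c|)) * max K 0) ?_ hm ?_
  · exact integrableOn_const measure_Ioc_lt_top.ne
  · refine (ae_restrict_iff' measurableSet_Ioc).2 (Eventually.of_forall fun s hs => ?_)
    have hs' : |s| ≤ |u| + |v| := by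
      rcases abs_le.1 (le_refl |s|) with _
      have h1 : u ≤ s := hs.1.le
      have h2 : s ≤ v := hs.2
      rcases le_or_gt 0 s with h | h
      · have : s ≤ |v| := h2.trans (le_abs_self v)
        rw [abs_of_nonneg h]
        have : (0:ℝ) ≤ |u| := abs_nonneg u
        linarith
      · rw [abs_of_neg h]
        have : -s ≤ -u := by linarith
        have h3 : -u ≤ |u| := neg_le_abs u
        have : (0:ℝ) ≤ |v| := abs_nonneg v
        linarith
    have hexp : Real.exp (-lam * (s - c)) ≤ Real.exp (|lam| * (|u| + |v| + |c|)) := by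
      apply Real.exp_le_exp.2
      calc -lam * (s - c) ≤ |(-lam) * (s - c)| := le_abs_self _
        _ = |lam| * |s - c| := by rw [abs_mul, abs_neg]
        _ ≤ |lam| * (|s| + |c|) := by
            refine mul_le_mul_of_nonneg_left ?_ (abs_nonneg lam)
            exact (abs_sub s c).trans le_rfl
        _ ≤ |lam| * (|u| + |v| + |c|) := by
            refine mul_le_mul_of_nonneg_left (by linarith) (abs_nonneg lam)
    have hl : ℓ (Z s) (α s) s ≤ max K 0 := (hK _ _ _).trans (le_max_left _ _)
    have hl0 : 0 ≤ ℓ (Z s) (α s) s := hℓ0 _ _ _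
    have hexp0 : 0 ≤ Real.exp (-lam * (s - c)) := (Real.exp_pos _).le
    rw [Real.norm_eq_abs, abs_of_nonneg (mul_nonneg hexp0 hl0)]
    exact mul_le_mul hexp hl hl0 (Real.exp_pos _).le


/-- Flow property and cost splitting along a trajectory. -/
lemma cost_split
    (A : Set (EuclideanSpace ℝ (Fin m)))
    (f : EuclideanSpace ℝ (Fin d) → EuclideanSpace ℝ (Fin m) → EuclideanSpace ℝ (Fin d))
    (hfc : Continuous fun q : EuclideanSpace ℝ (Fin d) × EuclideanSpace ℝ (Fin m) =>
      f q.1 q.2)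
    (M : ℝ) (hfM : ∀ x a, ‖f x a‖ ≤ M)
    (L : ℝ) (hfLip : ∀ x y a, a ∈ A → ‖f x a - f y a‖ ≤ L * ‖x - y‖)
    (ℓ : EuclideanSpace ℝ (Fin d) → EuclideanSpace ℝ (Fin m) → ℝ → ℝ)
    (hℓ0 : ∀ x a s, 0 ≤ ℓ x a s) (hℓb : ∃ K, ∀ x a s, ℓ x a s ≤ K)
    (hℓc : Continuous fun q : EuclideanSpace ℝ (Fin d) × EuclideanSpace ℝ (Fin m) × ℝ =>
      ℓ q.1 q.2.1 q.2.2)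
    (ψ : EuclideanSpace ℝ (Fin d) → ℝ → ℝ) (lam : ℝ)
    (Y : EuclideanSpace ℝ (Fin d) → ℝ → (ℝ → EuclideanSpace ℝ (Fin m)) → ℝ →
      EuclideanSpace ℝ (Fin d))
    (hY : ∀ x t α s, Y x t α s = x + ∫ ζ in t..s, f (Y x t α ζ) (α ζ))
    (α : ℝ → EuclideanSpace ℝ (Fin m)) (hα : α ∈ Ctrl A)
    (x : EuclideanSpace ℝ (Fin d)) (t ζ τ : ℝ) (htζ : t ≤ ζ) (hζτ : ζ ≤ τ) :
    (∀ s ∈ Icc ζ τ, Y (Y x t α ζ) ζ α s = Y x t α s) ∧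
      costJ ℓ ψ lam Y x t α τ =
        (∫ s in t..ζ, Real.exp (-lam * (s - t)) * ℓ (Y x t α s) (α s) s)
          + Real.exp (-lam * (ζ - t)) * costJ ℓ ψ lam Y (Y x t α ζ) ζ α τ := by
  obtain ⟨hαm, hαA⟩ := hα
  set Z : ℝ → EuclideanSpace ℝ (Fin d) := Y x t α with hZdef
  set W : ℝ → EuclideanSpace ℝ (Fin d) := Y (Z ζ) ζ α with hWdef
  obtain ⟨hZint, hZc⟩ := traj_basic f hfc M hfM α hαm Z x t (hY x t α)
  obtain ⟨hWint, hWc⟩ := traj_basic f hfc M hfM α hαm W (Z ζ) ζ (hY (Z ζ) ζ α)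
  -- interval integrability of the vector field along Z
  have hZii : ∀ u v, t ≤ u → u ≤ v →
      IntervalIntegrable (fun r => f (Z r) (α r)) volume u v := by
    intro u v htu huv
    rw [intervalIntegrable_iff_integrableOn_Ioc_of_le huv]
    exact (hZint v (htu.trans huv)).mono_set (Ioc_subset_Ioc htu le_rfl)
  -- re-anchored equation for Z on [ζ, τ]
  have hZre : ∀ s ∈ Icc ζ τ, Z s = Z ζ + ∫ r in ζ..s, f (Z r) (α r) := by
    intro s hs
    have hadd := intervalIntegral.integral_add_adjacent_intervals
      (hZii t ζ le_rfl htζ) (hZii ζ s htζ hs.1)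
    have h1 : Z s = x + ∫ r in t..s, f (Z r) (α r) := hY x t α s
    have h2 : Z ζ = x + ∫ r in t..ζ, f (Z r) (α r) := hY x t α ζ
    rw [h1, h2, ← hadd]
    abel
  -- flow property
  have hflow : ∀ s ∈ Icc ζ τ, W s = Z s := by
    refine traj_unique A f L hfLip α α hαA W Z ζ τ ?_ ?_ ?_ ?_ ?_ ?_
    · exact hWint τ hζτ
    · exact (hZint τ (htζ.trans hζτ)).mono_set (Ioc_subset_Ioc htζ le_rfl)
    · intro s _
      have h1 : W s = Z ζ + ∫ r in ζ..s, f (W r) (α r) := hY (Z ζ) ζ α s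
      have h2 : W ζ = Z ζ := by
        have := hY (Z ζ) ζ α ζ
        simpa using this
      rw [h1, h2]
    · intro s hs
      have h2 : W ζ = Z ζ := by simpa using hY (Z ζ) ζ α ζ
      have h3 : Z ζ = Z ζ := rfl
      calc Z s = Z ζ + ∫ r in ζ..s, f (Z r) (α r) := hZre s hs
        _ = Z ζ + ∫ r in ζ..s, f (Z r) (α r) := rfl
    · simpa using hY (Z ζ) ζ α ζ
    · intro r _; rfl
  have hflow' : ∀ s ∈ Icc ζ τ, Y (Z ζ) ζ α s = Y x t α s := hflow
  refine ⟨hflow', ?_⟩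
  -- cost splitting
  have hii1 : IntervalIntegrable
      (fun s => Real.exp (-lam * (s - t)) * ℓ (Z s) (α s) s) volume t ζ :=
    integrand_integrable ℓ hℓ0 hℓb hℓc lam α hαm Z t hZc t t ζ le_rfl htζ
  have hii2 : IntervalIntegrable
      (fun s => Real.exp (-lam * (s - t)) * ℓ (Z s) (α s) s) volume ζ τ :=
    integrand_integrable ℓ hℓ0 hℓb hℓc lam α hαm Z t hZc t ζ τ htζ hζτ
  have hsplit := intervalIntegral.integral_add_adjacent_intervals hii1 hii2
  have hexpfac : ∀ s : ℝ, Real.exp (-lam * (s - t))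
      = Real.exp (-lam * (ζ - t)) * Real.exp (-lam * (s - ζ)) := by
    intro s
    rw [← Real.exp_add]
    congr 1
    ring
  have hmid : (∫ s in ζ..τ, Real.exp (-lam * (s - t)) * ℓ (Z s) (α s) s)
      = Real.exp (-lam * (ζ - t))
        * ∫ s in ζ..τ, Real.exp (-lam * (s - ζ)) * ℓ (W s) (α s) s := by
    rw [← intervalIntegral.integral_const_mul]
    refine intervalIntegral.integral_congr fun s hs => ?_
    rw [uIcc_of_le hζτ] at hs
    rw [hflow s hs, hexpfac s]
    ring
  show (∫ s in t..τ, Real.exp (-lam * (s - t)) * ℓ (Z s) (α s) s)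
      + Real.exp (-lam * (τ - t)) * ψ (Z τ) τ = _
  rw [← hsplit, hmid]
  have hψterm : Real.exp (-lam * (τ - t)) * ψ (Z τ) τ
      = Real.exp (-lam * (ζ - t)) * (Real.exp (-lam * (τ - ζ)) * ψ (W τ) τ) := by
    rw [hflow τ ⟨hζτ, le_rfl⟩, ← mul_assoc, ← Real.exp_add]
    congr 2
    ring
  rw [hψterm]
  show _ = _ + Real.exp (-lam * (ζ - t)) *
    ((∫ s in ζ..τ, Real.exp (-lam * (s - ζ)) * ℓ (W s) (α s) s)
      + Real.exp (-lam * (τ - ζ)) * ψ (W τ) τ)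
  ring


/-- Concatenation of controls: cost of the concatenated control splits into the
running cost of `α` up to `ζ` plus discounted cost of `α'` from `(Y x t α ζ, ζ)`. -/
lemma concat_cost
    (A : Set (EuclideanSpace ℝ (Fin m)))
    (f : EuclideanSpace ℝ (Fin d) → EuclideanSpace ℝ (Fin m) → EuclideanSpace ℝ (Fin d))
    (hfc : Continuous fun q : EuclideanSpace ℝ (Fin d) × EuclideanSpace ℝ (Fin m) =>
      f q.1 q.2)
    (M : ℝ) (hfM : ∀ x a, ‖f x a‖ ≤ M)
    (L : ℝ) (hfLip : ∀ x y a, a ∈ A → ‖f x a - f y a‖ ≤ L * ‖x - y‖)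
    (ℓ : EuclideanSpace ℝ (Fin d) → EuclideanSpace ℝ (Fin m) → ℝ → ℝ)
    (hℓ0 : ∀ x a s, 0 ≤ ℓ x a s) (hℓb : ∃ K, ∀ x a s, ℓ x a s ≤ K)
    (hℓc : Continuous fun q : EuclideanSpace ℝ (Fin d) × EuclideanSpace ℝ (Fin m) × ℝ =>
      ℓ q.1 q.2.1 q.2.2)
    (ψ : EuclideanSpace ℝ (Fin d) → ℝ → ℝ) (lam : ℝ)
    (Y : EuclideanSpace ℝ (Fin d) → ℝ → (ℝ → EuclideanSpace ℝ (Fin m)) → ℝ →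
      EuclideanSpace ℝ (Fin d))
    (hY : ∀ x t α s, Y x t α s = x + ∫ ζ in t..s, f (Y x t α ζ) (α ζ))
    (α α' : ℝ → EuclideanSpace ℝ (Fin m)) (hα : α ∈ Ctrl A) (hα' : α' ∈ Ctrl A)
    (x : EuclideanSpace ℝ (Fin d)) (t ζ τ' : ℝ) (htζ : t ≤ ζ) (hζτ : ζ ≤ τ') :
    (fun r => if r < ζ then α r else α' r) ∈ Ctrl A ∧
      costJ ℓ ψ lam Y x t (fun r => if r < ζ then α r else α' r) τ' =
        (∫ s in t..ζ, Real.exp (-lam * (s - t)) * ℓ (Y x t α s) (α s) s)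
          + Real.exp (-lam * (ζ - t)) * costJ ℓ ψ lam Y (Y x t α ζ) ζ α' τ' := by
  obtain ⟨hαm, hαA⟩ := hα
  obtain ⟨hα'm, hα'A⟩ := hα'
  set β : ℝ → EuclideanSpace ℝ (Fin m) := fun r => if r < ζ then α r else α' r with hβdef
  have hβmem : β ∈ Ctrl A := by
    constructor
    · exact Measurable.ite (measurableSet_lt measurable_id measurable_const) hαm hα'm
    · intro s
      by_cases h : s < ζ <;> simp [hβdef, h, hαA s, hα'A s]
  have hβm := hβmem.1
  have hβA := hβmem.2
  set Z : ℝ → EuclideanSpace ℝ (Fin d) := Y x t α with hZdef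
  set Zβ : ℝ → EuclideanSpace ℝ (Fin d) := Y x t β with hZβdef
  obtain ⟨hZint, hZc⟩ := traj_basic f hfc M hfM α hαm Z x t (hY x t α)
  obtain ⟨hZβint, hZβc⟩ := traj_basic f hfc M hfM β hβm Zβ x t (hY x t β)
  -- Zβ = Z on [t, ζ]
  have heqZ : ∀ s ∈ Icc t ζ, Zβ s = Z s := by
    refine traj_unique A f L hfLip β α hβA Zβ Z t ζ (hZβint ζ htζ) (hZint ζ htζ) ?_ ?_ ?_ ?_
    · intro s _
      have h0 : Zβ t = x := by simpa using hY x t β t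
      rw [h0]; exact hY x t β s
    · intro s _
      have h0 : Z t = x := by simpa using hY x t α t
      rw [h0]; exact hY x t α s
    · have h1 : Zβ t = x := by simpa using hY x t β t
      have h2 : Z t = x := by simpa using hY x t α t
      rw [h1, h2]
    · intro r hr
      exact if_pos hr.2
  have hζeq : Zβ ζ = Z ζ := heqZ ζ ⟨htζ, le_rfl⟩
  -- apply cost_split to β
  obtain ⟨hflowβ, hsplitβ⟩ := cost_split A f hfc M hfM L hfLip ℓ hℓ0 hℓb hℓc ψ lam Y hY
    β hβmem x t ζ τ' htζ hζτ
  -- first integral: replace (Zβ, β) by (Z, α) a.e. on Ioc t ζ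
  have hint1eq : (∫ s in t..ζ, Real.exp (-lam * (s - t)) * ℓ (Zβ s) (β s) s)
      = ∫ s in t..ζ, Real.exp (-lam * (s - t)) * ℓ (Z s) (α s) s := by
    refine intervalIntegral.integral_congr_ae ?_
    have hζae : ∀ᵐ s : ℝ ∂volume, s ≠ ζ := by
      rw [ae_iff]
      simpa using measure_singleton (ζ : ℝ)
    filter_upwards [hζae] with s hsne hs
    rw [uIoc_of_le htζ] at hs
    have hsζ : s < ζ := lt_of_le_of_ne hs.2 hsne
    have h1 : β s = α s := if_pos hsζ
    have h2 : Zβ s = Z s := heqZ s ⟨hs.1.le, hs.2⟩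
    rw [h1, h2]
  -- trajectories from (Z ζ, ζ) under β and α' agree on [ζ, τ']
  have heqW : ∀ s ∈ Icc ζ τ', Y (Z ζ) ζ β s = Y (Z ζ) ζ α' s := by
    obtain ⟨hWβint, hWβc⟩ := traj_basic f hfc M hfM β hβm (Y (Z ζ) ζ β) (Z ζ) ζ (hY (Z ζ) ζ β)
    obtain ⟨hW'int, hW'c⟩ := traj_basic f hfc M hfM α' hα'm (Y (Z ζ) ζ α') (Z ζ) ζ
      (hY (Z ζ) ζ α')
    refine traj_unique A f L hfLip β α' hβA _ _ ζ τ' (hWβint τ' hζτ) (hW'int τ' hζτ)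
      ?_ ?_ ?_ ?_
    · intro s _
      have h0 : Y (Z ζ) ζ β ζ = Z ζ := by simpa using hY (Z ζ) ζ β ζ
      rw [h0]; exact hY (Z ζ) ζ β s
    · intro s _
      have h0 : Y (Z ζ) ζ α' ζ = Z ζ := by simpa using hY (Z ζ) ζ α' ζ
      rw [h0]; exact hY (Z ζ) ζ α' s
    · have h1 : Y (Z ζ) ζ β ζ = Z ζ := by simpa using hY (Z ζ) ζ β ζ
      have h2 : Y (Z ζ) ζ α' ζ = Z ζ := by simpa using hY (Z ζ) ζ α' ζ
      rw [h1, h2]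
    · intro r hr
      exact if_neg (not_lt.2 hr.1)
  -- costs from (Z ζ, ζ) agree
  have hcost2 : costJ ℓ ψ lam Y (Z ζ) ζ β τ' = costJ ℓ ψ lam Y (Z ζ) ζ α' τ' := by
    show (∫ s in ζ..τ', Real.exp (-lam * (s - ζ)) * ℓ (Y (Z ζ) ζ β s) (β s) s)
        + Real.exp (-lam * (τ' - ζ)) * ψ (Y (Z ζ) ζ β τ') τ' = _
    have hint : (∫ s in ζ..τ', Real.exp (-lam * (s - ζ)) * ℓ (Y (Z ζ) ζ β s) (β s) s)
        = ∫ s in ζ..τ', Real.exp (-lam * (s - ζ)) * ℓ (Y (Z ζ) ζ α' s) (α' s) s := by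
      refine intervalIntegral.integral_congr fun s hs => ?_
      rw [uIcc_of_le hζτ] at hs
      have h1 : β s = α' s := if_neg (not_lt.2 hs.1)
      rw [h1, heqW s hs]
    rw [hint, heqW τ' ⟨hζτ, le_rfl⟩]
    rfl
  rw [show Y x t β ζ = Z ζ from hζeq] at hsplitβ
  refine ⟨hβmem, ?_⟩
  rw [hsplitβ, hcost2]
  congr 1


end Helpers

set_option maxHeartbeats 1000000 in
/-- Local dynamic programming equality where the obstacle is not attained:
if V(x,t) < ψ(x,t) then for some t₀ > 0 and all ζ ∈ [t, t+t₀],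
V(x,t) = inf_α [∫_t^ζ e^{−λ(s−t)} ℓ ds + e^{−λ(ζ−t)} V(y(ζ), ζ)]. -/
theorem stmt5
    {d m : ℕ} (T lam : ℝ) (hT : 0 < T) (hlam : 0 ≤ lam)
    (A : Set (EuclideanSpace ℝ (Fin m))) (hA : IsCompact A) (hAne : A.Nonempty)
    (f : EuclideanSpace ℝ (Fin d) → EuclideanSpace ℝ (Fin m) → EuclideanSpace ℝ (Fin d))
    (hfc : Continuous fun q : EuclideanSpace ℝ (Fin d) × EuclideanSpace ℝ (Fin m) =>
      f q.1 q.2)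
    (M : ℝ) (hfM : ∀ x a, ‖f x a‖ ≤ M)
    (L : ℝ) (hfLip : ∀ x y a, a ∈ A → ‖f x a - f y a‖ ≤ L * ‖x - y‖)
    (ℓ : EuclideanSpace ℝ (Fin d) → EuclideanSpace ℝ (Fin m) → ℝ → ℝ)
    (hℓ0 : ∀ x a s, 0 ≤ ℓ x a s) (hℓb : ∃ K, ∀ x a s, ℓ x a s ≤ K)
    (hℓc : Continuous fun q : EuclideanSpace ℝ (Fin d) × EuclideanSpace ℝ (Fin m) × ℝ =>
      ℓ q.1 q.2.1 q.2.2)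
    (hℓuc : ∀ ε > 0, ∃ δ > 0, ∀ x y a s, ‖x - y‖ < δ → |ℓ x a s - ℓ y a s| < ε)
    (ψ : EuclideanSpace ℝ (Fin d) → ℝ → ℝ)
    (hψ0 : ∀ x t, 0 ≤ ψ x t) (hψb : ∃ K, ∀ x t, ψ x t ≤ K)
    (hψuc : UniformContinuousOn (fun q : EuclideanSpace ℝ (Fin d) × ℝ => ψ q.1 q.2)
      (univ ×ˢ Icc (0 : ℝ) T))
    (Y : EuclideanSpace ℝ (Fin d) → ℝ → (ℝ → EuclideanSpace ℝ (Fin m)) → ℝ →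
      EuclideanSpace ℝ (Fin d))
    (hY : ∀ x t α s, Y x t α s = x + ∫ ζ in t..s, f (Y x t α ζ) (α ζ))
    (V : EuclideanSpace ℝ (Fin d) → ℝ → ℝ)
    (hV : ∀ x t, V x t =
      sInf {c | ∃ α ∈ Ctrl A, ∃ τ ∈ Icc t T, c = costJ ℓ ψ lam Y x t α τ})
    (x : EuclideanSpace ℝ (Fin d)) (t : ℝ) (ht : t ∈ Ico (0 : ℝ) T)
    (hobst : V x t < ψ x t) :
    ∃ t₀ > (0 : ℝ), ∀ ζ ∈ Icc t (t + t₀),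
      V x t = sInf {c | ∃ α ∈ Ctrl A,
        c = (∫ s in t..ζ, Real.exp (-lam * (s - t)) * ℓ (Y x t α s) (α s) s)
          + Real.exp (-lam * (ζ - t)) * V (Y x t α ζ) ζ} := by
  obtain ⟨a₀, ha₀⟩ := hAne
  obtain ⟨Kψ, hKψ⟩ := hψb
  set α₀ : ℝ → EuclideanSpace ℝ (Fin m) := fun _ => a₀ with hα₀def
  have hα₀ : α₀ ∈ Ctrl A := ⟨measurable_const, fun _ => ha₀⟩
  -- the defining sets for V
  set Sv : EuclideanSpace ℝ (Fin d) → ℝ → Set ℝ := fun y s =>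
    {c | ∃ α ∈ Ctrl A, ∃ τ ∈ Icc s T, c = costJ ℓ ψ lam Y y s α τ} with hSvdef
  have hY0 : ∀ (y : EuclideanSpace ℝ (Fin d)) (s : ℝ) (α : ℝ → EuclideanSpace ℝ (Fin m)),
      Y y s α s = y := by
    intro y s α
    simpa using hY y s α s
  have hcost_self : ∀ (y : EuclideanSpace ℝ (Fin d)) (s : ℝ)
      (α : ℝ → EuclideanSpace ℝ (Fin m)), costJ ℓ ψ lam Y y s α s = ψ y s := by
    intro y s α
    show (∫ u in s..s, Real.exp (-lam * (u - s)) * ℓ (Y y s α u) (α u) u)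
      + Real.exp (-lam * (s - s)) * ψ (Y y s α s) s = ψ y s
    rw [intervalIntegral.integral_same, hY0]
    simp
  have hSvne : ∀ y s, s ≤ T → (Sv y s).Nonempty := by
    intro y s hsT
    exact ⟨costJ ℓ ψ lam Y y s α₀ s, α₀, hα₀, s, ⟨le_rfl, hsT⟩, rfl⟩
  have hcost_nonneg : ∀ (y : EuclideanSpace ℝ (Fin d)) (s : ℝ)
      (α : ℝ → EuclideanSpace ℝ (Fin m)) (τ : ℝ), s ≤ τ →
      0 ≤ costJ ℓ ψ lam Y y s α τ := by
    intro y s α τ hsτ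
    have h1 : 0 ≤ ∫ u in s..τ, Real.exp (-lam * (u - s)) * ℓ (Y y s α u) (α u) u :=
      intervalIntegral.integral_nonneg hsτ fun u _ =>
        mul_nonneg (Real.exp_pos _).le (hℓ0 _ _ _)
    have h2 : 0 ≤ Real.exp (-lam * (τ - s)) * ψ (Y y s α τ) τ :=
      mul_nonneg (Real.exp_pos _).le (hψ0 _ _)
    exact add_nonneg h1 h2
  have hSvbdd : ∀ y s, BddBelow (Sv y s) := by
    intro y s
    refine ⟨0, fun c hc => ?_⟩
    obtain ⟨α, hα, τ, hτ, rfl⟩ := hc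
    exact hcost_nonneg y s α τ hτ.1
  have hVnonneg : ∀ y s, s ≤ T → 0 ≤ V y s := by
    intro y s hsT
    rw [hV]
    exact le_csInf (hSvne y s hsT) fun c hc => by
      obtain ⟨α, hα, τ, hτ, rfl⟩ := hc
      exact hcost_nonneg y s α τ hτ.1
  have hVleψ : ∀ y s, s ≤ T → V y s ≤ ψ y s := by
    intro y s hsT
    rw [hV]
    have : ψ y s ∈ Sv y s := ⟨α₀, hα₀, s, ⟨le_rfl, hsT⟩, (hcost_self y s α₀).symm⟩
    exact csInf_le (hSvbdd y s) this
  have hKψ0 : 0 ≤ Kψ := (hψ0 x t).trans (hKψ x t)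
  have hM0 : 0 ≤ M := (norm_nonneg _).trans (hfM x a₀)
  set Δ : ℝ := ψ x t - V x t with hΔdef
  have hΔpos : 0 < Δ := by simp [hΔdef]; linarith
  -- uniform continuity of ψ
  obtain ⟨δψ, hδψpos, hδψ⟩ := Metric.uniformContinuousOn_iff.1 hψuc (Δ / 4) (by positivity)
  -- choice of t₀
  set t₀ : ℝ := min (T - t) (min (δψ / (2 * (M + 1)))
    (Δ / (8 * (lam + 1) * (Kψ + Δ + 1)))) with ht₀def
  have ht₀pos : 0 < t₀ := by
    refine lt_min (by linarith [ht.2]) (lt_min (by positivity) (by positivity))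
  have ht₀T : t + t₀ ≤ T := by
    have := min_le_left (T - t) (min (δψ / (2 * (M + 1)))
      (Δ / (8 * (lam + 1) * (Kψ + Δ + 1))))
    rw [← ht₀def] at this
    linarith
  have ht₀δ : (M + 1) * t₀ < δψ := by
    have h1 : t₀ ≤ δψ / (2 * (M + 1)) :=
      le_trans (min_le_right _ _) (min_le_left _ _)
    have h2 : (M + 1) * t₀ ≤ (M + 1) * (δψ / (2 * (M + 1))) :=
      mul_le_mul_of_nonneg_left h1 (by linarith)
    have h3 : (M + 1) * (δψ / (2 * (M + 1))) = δψ / 2 := by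
      field_simp
    rw [h3] at h2
    linarith
  have ht₀lam : lam * t₀ * (Kψ + Δ) ≤ Δ / 8 ∧ lam * t₀ ≤ 1 := by
    have h1 : t₀ ≤ Δ / (8 * (lam + 1) * (Kψ + Δ + 1)) :=
      le_trans (min_le_right _ _) (min_le_right _ _)
    have hKΔ : (0:ℝ) < Kψ + Δ + 1 := by linarith
    have hlam1 : (0:ℝ) < lam + 1 := by linarith
    have hD : (0:ℝ) < 8 * (lam + 1) * (Kψ + Δ + 1) := by positivity
    have key : t₀ * (8 * (lam + 1) * (Kψ + Δ + 1)) ≤ Δ := (le_div_iff₀ hD).1 h1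
    constructor
    · nlinarith [key, ht₀pos.le, hlam, hKψ0, hΔpos.le,
        mul_nonneg ht₀pos.le (by linarith : (0:ℝ) ≤ lam + Kψ + Δ + 1),
        mul_nonneg (mul_nonneg ht₀pos.le hlam) hKψ0]
    · nlinarith [key, ht₀pos.le, hlam, hKψ0, hΔpos.le,
        mul_nonneg ht₀pos.le hlam, mul_nonneg (mul_nonneg ht₀pos.le hlam) hKψ0,
        mul_nonneg ht₀pos.le hKψ0]
  refine ⟨t₀, ht₀pos, ?_⟩
  intro ζ hζ
  have htζ : t ≤ ζ := hζ.1
  have hζT : ζ ≤ T := hζ.2.trans ht₀T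
  have hζ0 : 0 ≤ ζ := ht.1.trans htζ
  set Sζ : Set ℝ := {c | ∃ α ∈ Ctrl A,
    c = (∫ s in t..ζ, Real.exp (-lam * (s - t)) * ℓ (Y x t α s) (α s) s)
      + Real.exp (-lam * (ζ - t)) * V (Y x t α ζ) ζ} with hSζdef
  have hSζne : Sζ.Nonempty := ⟨_, α₀, hα₀, rfl⟩
  have hInonneg : ∀ α : ℝ → EuclideanSpace ℝ (Fin m),
      0 ≤ ∫ s in t..ζ, Real.exp (-lam * (s - t)) * ℓ (Y x t α s) (α s) s := fun α =>
    intervalIntegral.integral_nonneg htζ fun u _ =>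
      mul_nonneg (Real.exp_pos _).le (hℓ0 _ _ _)
  have hSζbdd : BddBelow Sζ := by
    refine ⟨0, fun c hc => ?_⟩
    obtain ⟨α, hα, rfl⟩ := hc
    exact add_nonneg (hInonneg α)
      (mul_nonneg (Real.exp_pos _).le (hVnonneg _ ζ hζT))
  have hexp_le_one : Real.exp (-lam * (ζ - t)) ≤ 1 := by
    rw [← Real.exp_zero]
    apply Real.exp_le_exp.2
    nlinarith [htζ, hlam]
  -- Part 1 : V x t ≤ sInf Sζ
  have hpart1 : V x t ≤ sInf Sζ := by
    refine le_csInf hSζne ?_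
    rintro c ⟨α, hα, rfl⟩
    set Zζ := Y x t α ζ with hZζ
    by_contra hcon
    push_neg at hcon
    set ε : ℝ := ((V x t) - ((∫ s in t..ζ, Real.exp (-lam * (s - t)) * ℓ (Y x t α s) (α s) s)
      + Real.exp (-lam * (ζ - t)) * V Zζ ζ)) / 2 with hεdef
    have hεpos : 0 < ε := by
      rw [hεdef]; linarith
    -- near-optimal control from (Zζ, ζ)
    have hVZζ : V Zζ ζ = sInf (Sv Zζ ζ) := hV Zζ ζ
    obtain ⟨c', hc'mem, hc'lt⟩ := Real.lt_sInf_add_pos (hSvne Zζ ζ hζT) hεpos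
    obtain ⟨α', hα', τ', hτ', rfl⟩ := hc'mem
    rw [← hVZζ] at hc'lt
    obtain ⟨hβmem, hβcost⟩ := concat_cost A f hfc M hfM L hfLip ℓ hℓ0 hℓb hℓc ψ lam Y hY
      α α' hα hα' x t ζ τ' htζ hτ'.1
    have hmemV : costJ ℓ ψ lam Y x t (fun r => if r < ζ then α r else α' r) τ' ∈ Sv x t :=
      ⟨_, hβmem, τ', ⟨htζ.trans hτ'.1, hτ'.2⟩, rfl⟩
    have hVle : V x t ≤ costJ ℓ ψ lam Y x t (fun r => if r < ζ then α r else α' r) τ' := by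
      rw [hV x t]
      exact csInf_le (hSvbdd x t) hmemV
    rw [hβcost] at hVle
    have hmul : Real.exp (-lam * (ζ - t)) * costJ ℓ ψ lam Y Zζ ζ α' τ'
        ≤ Real.exp (-lam * (ζ - t)) * (V Zζ ζ + ε) :=
      mul_le_mul_of_nonneg_left hc'lt.le (Real.exp_pos _).le
    have hVε : 0 ≤ V Zζ ζ := hVnonneg Zζ ζ hζT
    have h2 : Real.exp (-lam * (ζ - t)) * (V Zζ ζ + ε)
        ≤ Real.exp (-lam * (ζ - t)) * V Zζ ζ + ε := by
      have := mul_le_mul_of_nonneg_right hexp_le_one hεpos.le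
      have hsplit : Real.exp (-lam * (ζ - t)) * (V Zζ ζ + ε)
          = Real.exp (-lam * (ζ - t)) * V Zζ ζ + Real.exp (-lam * (ζ - t)) * ε := by ring
      rw [hsplit]
      linarith
    linarith [hVle, hmul, h2, hεdef]
  -- Part 2 : sInf Sζ ≤ V x t
  have hpart2 : sInf Sζ ≤ V x t := by
    by_contra hcon
    push_neg at hcon
    set ε : ℝ := min ((sInf Sζ - V x t) / 2) (Δ / 8) with hεdef
    have hεpos : 0 < ε := lt_min (by linarith) (by positivity)
    have hεΔ : ε ≤ Δ / 8 := min_le_right _ _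
    have hεhalf : ε ≤ (sInf Sζ - V x t) / 2 := min_le_left _ _
    obtain ⟨c, hcmem, hclt⟩ := Real.lt_sInf_add_pos (hSvne x t (le_of_lt ht.2)) hεpos
    rw [← hV x t] at hclt
    obtain ⟨α, hα, τ, hτ, rfl⟩ := hcmem
    set Z := Y x t α with hZdef
    rcases le_or_gt ζ τ with hζτ | hτζ
    · -- stopping after ζ : compare with an element of Sζ
      obtain ⟨hflow, hsplit⟩ := cost_split A f hfc M hfM L hfLip ℓ hℓ0 hℓb hℓc ψ lam Y hY
        α hα x t ζ τ htζ hζτ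
      have htail : V (Z ζ) ζ ≤ costJ ℓ ψ lam Y (Z ζ) ζ α τ := by
        rw [hV]
        exact csInf_le (hSvbdd _ _) ⟨α, hα, τ, ⟨hζτ, hτ.2⟩, rfl⟩
      have hCel : (∫ s in t..ζ, Real.exp (-lam * (s - t)) * ℓ (Z s) (α s) s)
          + Real.exp (-lam * (ζ - t)) * V (Z ζ) ζ ∈ Sζ := ⟨α, hα, rfl⟩
      have h1 : sInf Sζ ≤ (∫ s in t..ζ, Real.exp (-lam * (s - t)) * ℓ (Z s) (α s) s)
          + Real.exp (-lam * (ζ - t)) * V (Z ζ) ζ := csInf_le hSζbdd hCel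
      have h2 : Real.exp (-lam * (ζ - t)) * V (Z ζ) ζ
          ≤ Real.exp (-lam * (ζ - t)) * costJ ℓ ψ lam Y (Z ζ) ζ α τ :=
        mul_le_mul_of_nonneg_left htail (Real.exp_pos _).le
      have h3 : sInf Sζ ≤ costJ ℓ ψ lam Y x t α τ := by
        rw [hsplit]
        linarith
      linarith
    · -- stopping before ζ : contradiction with the obstacle gap
      have hτt₀ : τ - t ≤ t₀ := by
        have : τ < t + t₀ := hτζ.trans_le hζ.2
        linarith
      have hτT : τ ∈ Icc (0:ℝ) T := ⟨ht.1.trans hτ.1, hτ.2⟩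
      -- trajectory stays close to x
      have hZclose : dist (Z τ) x ≤ M * (τ - t) := by
        have h1 : Z τ - x = ∫ r in t..τ, f (Z r) (α r) := by
          rw [hZdef, hY x t α τ]; abel
        rw [dist_eq_norm, h1]
        have h2 := intervalIntegral.norm_integral_le_of_norm_le_const
          (C := M) (f := fun r => f (Z r) (α r)) (a := t) (b := τ)
          (fun r _ => hfM _ _)
        rwa [abs_of_nonneg (by linarith [hτ.1] : (0:ℝ) ≤ τ - t)] at h2
      have hdistp : dist ((Z τ, τ) : EuclideanSpace ℝ (Fin d) × ℝ) (x, t) < δψ := by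
        rw [Prod.dist_eq]
        have h1 : dist (Z τ) x ≤ M * t₀ :=
          hZclose.trans (mul_le_mul_of_nonneg_left hτt₀ hM0)
        have h2 : dist τ t ≤ t₀ := by
          rw [Real.dist_eq, abs_of_nonneg (by linarith [hτ.1] : (0:ℝ) ≤ τ - t)]
          linarith
        have hmm : max (dist (Z τ) x) (dist τ t) ≤ (M + 1) * t₀ := by
          refine max_le (h1.trans ?_) (h2.trans ?_) <;> nlinarith [ht₀pos.le, hM0]
        exact lt_of_le_of_lt hmm ht₀δ
      have hψclose : |ψ (Z τ) τ - ψ x t| < Δ / 4 := by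
        have := hδψ (Z τ, τ) (by simp [hτT.1, hτT.2]) (x, t)
          (by simp [ht.1, ht.2.le]) hdistp
        rwa [Real.dist_eq] at this
      have hψlb : V x t + 3 * Δ / 4 ≤ ψ (Z τ) τ := by
        have h1 : ψ x t - Δ / 4 ≤ ψ (Z τ) τ := by
          have := abs_lt.1 hψclose
          linarith [this.1]
        rw [hΔdef] at *
        linarith
      -- lower bound on the cost
      have hexplb : Real.exp (-lam * (τ - t)) ≥ 1 - lam * t₀ := by
        have h1 : Real.exp (-(lam * t₀)) ≤ Real.exp (-lam * (τ - t)) := by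
          apply Real.exp_le_exp.2
          nlinarith [hτt₀, hlam, hτ.1]
        have h2 : 1 - lam * t₀ ≤ Real.exp (-(lam * t₀)) := by
          have := Real.add_one_le_exp (-(lam * t₀))
          linarith
        linarith
      have hψnn : 0 ≤ ψ (Z τ) τ := hψ0 _ _
      have hcost_lb : (1 - lam * t₀) * (V x t + 3 * Δ / 4) ≤ costJ ℓ ψ lam Y x t α τ := by
        have h1 : 0 ≤ ∫ u in t..τ, Real.exp (-lam * (u - t)) * ℓ (Z u) (α u) u :=
          intervalIntegral.integral_nonneg hτ.1 fun u _ =>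
            mul_nonneg (Real.exp_pos _).le (hℓ0 _ _ _)
        have h2 : Real.exp (-lam * (τ - t)) * ψ (Z τ) τ ≤ costJ ℓ ψ lam Y x t α τ := by
          show _ ≤ (∫ u in t..τ, Real.exp (-lam * (u - t)) * ℓ (Z u) (α u) u)
            + Real.exp (-lam * (τ - t)) * ψ (Z τ) τ
          linarith
        have h3 : (1 - lam * t₀) * (V x t + 3 * Δ / 4)
            ≤ Real.exp (-lam * (τ - t)) * ψ (Z τ) τ := by
          have hVψ : 0 ≤ V x t + 3 * Δ / 4 := by
            have := hVnonneg x t ht.2.le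
            linarith
          have h4 : (1 - lam * t₀) * (V x t + 3 * Δ / 4)
              ≤ Real.exp (-lam * (τ - t)) * (V x t + 3 * Δ / 4) :=
            mul_le_mul_of_nonneg_right hexplb hVψ
          have h5 : Real.exp (-lam * (τ - t)) * (V x t + 3 * Δ / 4)
              ≤ Real.exp (-lam * (τ - t)) * ψ (Z τ) τ :=
            mul_le_mul_of_nonneg_left hψlb (Real.exp_pos _).le
          linarith
        linarith
      -- the contradiction
      have hVK : V x t ≤ Kψ := (hVleψ x t ht.2.le).trans (hKψ x t)
      have hlamt₀nn : 0 ≤ lam * t₀ := mul_nonneg hlam ht₀pos.le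
      have hfinal : V x t + 5 * Δ / 8 ≤ costJ ℓ ψ lam Y x t α τ := by
        have h1 : lam * t₀ * (V x t + 3 * Δ / 4) ≤ lam * t₀ * (Kψ + Δ) := by
          refine mul_le_mul_of_nonneg_left ?_ hlamt₀nn
          linarith
        have h2 := ht₀lam.1
        nlinarith [hcost_lb]
      have : costJ ℓ ψ lam Y x t α τ < V x t + Δ / 8 := by
        calc costJ ℓ ψ lam Y x t α τ < V x t + ε := hclt
          _ ≤ V x t + Δ / 8 := by linarith
      linarith
  exact le_antisymm hpart1 hpart2
end
end

section
/- The value functions V_p of the backwardly-defined time-dependent optimal stopping problems are bounded and uniformly continuous on ℝ^d × [0,T] for every p ∈ ℐ = {0,1}^N. -/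
open Set MeasureTheory intervalIntegral RealInnerProductSpace

noncomputable section

/-- The set of admissible switching destinations from `p`:
already-visited targets stay visited and at least one new target is marked. -/
def SwitchSet {N : ℕ} (p : Fin N → Bool) : Set (Fin N → Bool) :=
  {q | (∀ i, p i = true → q i = true) ∧ ∃ l, p l = false ∧ q l = true}

/-- The Hamiltonian `H^p(x,t,ξ) = sup_{a ∈ A} {−f(x,a,p)·ξ − ℓ(x,a,p,t)}`. -/
def Hamp {d m N : ℕ} (A : Set (EuclideanSpace ℝ (Fin m)))
    (f : EuclideanSpace ℝ (Fin d) → EuclideanSpace ℝ (Fin m) → (Fin N → Bool) →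
      EuclideanSpace ℝ (Fin d))
    (ℓ : EuclideanSpace ℝ (Fin d) → EuclideanSpace ℝ (Fin m) → (Fin N → Bool) → ℝ → ℝ)
    (p : Fin N → Bool)
    (x : EuclideanSpace ℝ (Fin d)) (t : ℝ) (ξ : EuclideanSpace ℝ (Fin d)) : ℝ :=
  sSup ((fun a => -⟪f x a p, ξ⟫ - ℓ x a p t) '' A)

section Helpers

/-- Bootstrapping a.e. strong measurability of the right-hand side along a trajectory. -/
lemma traj_aesm {d m : ℕ}
    (F : EuclideanSpace ℝ (Fin d) → EuclideanSpace ℝ (Fin m) → EuclideanSpace ℝ (Fin d))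
    (hFc : Continuous fun q : EuclideanSpace ℝ (Fin d) × EuclideanSpace ℝ (Fin m) => F q.1 q.2)
    {α : ℝ → EuclideanSpace ℝ (Fin m)} (hα : Measurable α)
    {x : EuclideanSpace ℝ (Fin d)} {t : ℝ}
    {Y : ℝ → EuclideanSpace ℝ (Fin d)}
    (hY : ∀ s, Y s = x + ∫ ζ in t..s, F (Y ζ) (α ζ)) :
    ∀ S, t ≤ S →
      AEStronglyMeasurable (fun ζ => F (Y ζ) (α ζ)) (volume.restrict (Ioc t S)) := by
  set g : ℝ → EuclideanSpace ℝ (Fin d) := fun ζ => F (Y ζ) (α ζ) with hg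
  set P : ℝ → Prop := fun s => AEStronglyMeasurable g (volume.restrict (Ioc t s)) with hP
  have hmono : ∀ s s', s' ≤ s → P s → P s' := by
    intro s s' hss h
    exact h.mono_measure (Measure.restrict_mono (Ioc_subset_Ioc le_rfl hss) le_rfl)
  have hPt : P t := by
    simp only [hP, Ioc_self, Measure.restrict_empty]
    exact aestronglyMeasurable_zero_measure g
  intro S htS
  by_contra hPS
  set Bad : Set ℝ := {s | s ∈ Icc t S ∧ ¬ P s} with hBad
  have hSBad : S ∈ Bad := ⟨⟨htS, le_rfl⟩, hPS⟩
  have hBadne : Bad.Nonempty := ⟨S, hSBad⟩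
  have hbdd : BddBelow Bad := ⟨t, fun s hs => hs.1.1⟩
  set b := sInf Bad with hb
  have htb : t ≤ b := le_csInf hBadne fun s hs => hs.1.1
  have hbS : b ≤ S := csInf_le hbdd hSBad
  -- all points strictly below b are good
  have hgood : ∀ s, t ≤ s → s < b → P s := by
    intro s hts hsb
    by_contra h
    exact absurd (csInf_le hbdd ⟨⟨hts, le_trans hsb.le hbS⟩, h⟩) (not_le.mpr hsb)
  -- b itself is good
  have hPb : P b := by
    rcases eq_or_lt_of_le htb with h | h
    · exact h ▸ hPt
    · have hcover : Ioc t b ⊆ (⋃ n : ℕ, Ioc t (b - (b - t) / (n + 1))) ∪ {b} := by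
        intro s hs
        rcases eq_or_lt_of_le hs.2 with h' | h'
        · exact Or.inr h'
        · left
          obtain ⟨n, hn⟩ := exists_nat_ge ((b - t) / (b - s))
          refine mem_iUnion.mpr ⟨n, hs.1, ?_⟩
          have hbs : 0 < b - s := by linarith
          have h1 : (b - t) / (b - s) ≤ (n : ℝ) + 1 := by linarith
          have h2 : (b - t) / ((n : ℝ) + 1) ≤ b - s := by
            rw [div_le_iff₀ (by positivity)] at h1 ⊢
            linarith [h1]
          linarith
      have haesm : AEStronglyMeasurable g
          (volume.restrict ((⋃ n : ℕ, Ioc t (b - (b - t) / (n + 1))) ∪ {b})) := by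
        rw [aestronglyMeasurable_union_iff]
        constructor
        · rw [aestronglyMeasurable_iUnion_iff]
          intro n
          rcases le_or_gt (b - (b - t) / (n + 1)) t with hc | hc
          · exact (hmono _ _ hc hPt)
          · refine hgood _ hc.le ?_
            have : 0 < (b - t) / ((n : ℝ) + 1) := div_pos (by linarith) (by positivity)
            linarith
        · have : (volume : Measure ℝ).restrict {b} = 0 := by
            simp [Measure.restrict_eq_zero]
          rw [this]
          exact aestronglyMeasurable_zero_measure g
      exact haesm.mono_measure (Measure.restrict_mono hcover le_rfl)
  -- hence b < S and every point in (b, S] is bad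
  have hbS' : b < S := by
    rcases eq_or_lt_of_le hbS with h | h
    · exact absurd (h ▸ hPb) hPS
    · exact h
  have hbad' : ∀ s, b < s → s ≤ S → ¬ P s := by
    intro s hbs hsS h
    have : s ≤ b := le_csInf hBadne (by
      intro s' hs'
      by_contra hlt
      exact hs'.2 (hmono s s' (not_le.mp hlt).le h))
    linarith
  -- on (b, S] the trajectory is constantly x
  have hYx : ∀ s, b < s → s ≤ S → Y s = x := by
    intro s hbs hsS
    have hts : t ≤ s := le_trans htb hbs.le
    have : ¬ AEStronglyMeasurable g (volume.restrict (Ioc t s)) := hbad' s hbs hsS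
    rw [hY s, intervalIntegral.integral_of_le hts,
      MeasureTheory.integral_non_aestronglyMeasurable this]
    simp
  -- so g is a.e.s.m. on (b, S], contradiction
  have : P S := by
    have hsplit : Ioc t b ∪ Ioc b S = Ioc t S := Ioc_union_Ioc_eq_Ioc htb hbS
    show AEStronglyMeasurable g (volume.restrict (Ioc t S))
    rw [← hsplit, aestronglyMeasurable_union_iff]
    refine ⟨hPb, ?_⟩
    have hmeas : AEStronglyMeasurable (fun ζ => F x (α ζ)) (volume.restrict (Ioc b S)) :=
      ((hFc.comp (continuous_const.prodMk continuous_id)).measurable.comp hα).aestronglyMeasurable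
    refine hmeas.congr ?_
    filter_upwards [ae_restrict_mem measurableSet_Ioc] with ζ hζ
    rw [hg]
    simp only [hYx ζ hζ.1 hζ.2]
  exact hPS this


/-- Interval integrability of the driving term along a trajectory. -/
lemma traj_intInt {d m : ℕ}
    (F : EuclideanSpace ℝ (Fin d) → EuclideanSpace ℝ (Fin m) → EuclideanSpace ℝ (Fin d))
    (hFc : Continuous fun q : EuclideanSpace ℝ (Fin d) × EuclideanSpace ℝ (Fin m) => F q.1 q.2)
    {M : ℝ} (hM : ∀ x a, ‖F x a‖ ≤ M)
    {α : ℝ → EuclideanSpace ℝ (Fin m)} (hα : Measurable α)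
    {x : EuclideanSpace ℝ (Fin d)} {t : ℝ}
    {Y : ℝ → EuclideanSpace ℝ (Fin d)}
    (hY : ∀ s, Y s = x + ∫ ζ in t..s, F (Y ζ) (α ζ)) :
    ∀ s₁ s₂, t ≤ s₁ → s₁ ≤ s₂ →
      IntervalIntegrable (fun ζ => F (Y ζ) (α ζ)) volume s₁ s₂ := by
  intro s₁ s₂ h1 h2
  rw [intervalIntegrable_iff_integrableOn_Ioc_of_le h2]
  have haesm := (traj_aesm F hFc hα hY s₂ (le_trans h1 h2)).mono_measure
    (Measure.restrict_mono (Ioc_subset_Ioc h1 le_rfl) le_rfl)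
  refine ⟨haesm, ?_⟩
  refine MeasureTheory.HasFiniteIntegral.restrict_of_bounded (C := M) ?_ ?_
  · exact measure_Ioc_lt_top
  · filter_upwards with ζ using hM _ _

/-- Lipschitz bound in time for the trajectory. -/
lemma traj_lip {d m : ℕ}
    (F : EuclideanSpace ℝ (Fin d) → EuclideanSpace ℝ (Fin m) → EuclideanSpace ℝ (Fin d))
    (hFc : Continuous fun q : EuclideanSpace ℝ (Fin d) × EuclideanSpace ℝ (Fin m) => F q.1 q.2)
    {M : ℝ} (hM : ∀ x a, ‖F x a‖ ≤ M)
    {α : ℝ → EuclideanSpace ℝ (Fin m)} (hα : Measurable α)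
    {x : EuclideanSpace ℝ (Fin d)} {t : ℝ}
    {Y : ℝ → EuclideanSpace ℝ (Fin d)}
    (hY : ∀ s, Y s = x + ∫ ζ in t..s, F (Y ζ) (α ζ)) :
    ∀ s₁ s₂, t ≤ s₁ → s₁ ≤ s₂ → ‖Y s₂ - Y s₁‖ ≤ M * (s₂ - s₁) := by
  intro s₁ s₂ h1 h2
  have hint := traj_intInt F hFc hM hα hY
  have heq : Y s₂ - Y s₁ = ∫ ζ in s₁..s₂, F (Y ζ) (α ζ) := by
    rw [hY s₂, hY s₁]
    rw [← intervalIntegral.integral_add_adjacent_intervals (hint t s₁ le_rfl h1)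
      (hint s₁ s₂ h1 h2)]
    abel
  rw [heq]
  have := intervalIntegral.norm_integral_le_of_norm_le_const
    (C := M) (f := fun ζ => F (Y ζ) (α ζ)) (a := s₁) (b := s₂) (fun ζ _ => hM _ _)
  calc ‖∫ ζ in s₁..s₂, F (Y ζ) (α ζ)‖ ≤ M * |s₂ - s₁| := this
    _ = M * (s₂ - s₁) := by rw [abs_of_nonneg (by linarith)]

/-- Continuity of the trajectory on `[t, ∞)`. -/
lemma traj_cont {d m : ℕ}
    (F : EuclideanSpace ℝ (Fin d) → EuclideanSpace ℝ (Fin m) → EuclideanSpace ℝ (Fin d))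
    (hFc : Continuous fun q : EuclideanSpace ℝ (Fin d) × EuclideanSpace ℝ (Fin m) => F q.1 q.2)
    {M : ℝ} (hM : ∀ x a, ‖F x a‖ ≤ M)
    {α : ℝ → EuclideanSpace ℝ (Fin m)} (hα : Measurable α)
    {x : EuclideanSpace ℝ (Fin d)} {t : ℝ}
    {Y : ℝ → EuclideanSpace ℝ (Fin d)}
    (hY : ∀ s, Y s = x + ∫ ζ in t..s, F (Y ζ) (α ζ)) :
    ContinuousOn Y (Ici t) := by
  have hM0 : 0 ≤ M := le_trans (norm_nonneg _) (hM x (α t))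
  have : LipschitzOnWith (Real.toNNReal M) Y (Ici t) := by
    rw [lipschitzOnWith_iff_dist_le_mul]
    intro s₁ h1 s₂ h2
    rw [Real.coe_toNNReal _ hM0, dist_eq_norm, Real.dist_eq]
    rcases le_total s₂ s₁ with h | h
    · rw [abs_of_nonneg (by linarith)]
      exact traj_lip F hFc hM hα hY s₂ s₁ h2 h
    · rw [abs_of_nonpos (by linarith), ← norm_neg]
      simp only [neg_sub]
      have := traj_lip F hFc hM hα hY s₁ s₂ h1 h
      linarith [this, traj_lip F hFc hM hα hY s₁ s₂ h1 h]
  exact this.continuousOn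


/-- Integral form of Grönwall's inequality for a continuous function. -/
lemma gronwall_int {h : ℝ → ℝ} (hc : Continuous h) {a b c K : ℝ}
    (hc0 : 0 ≤ c) (hK : 0 ≤ K)
    (h0 : ∀ s ∈ Icc a b, 0 ≤ h s)
    (hineq : ∀ s ∈ Icc a b, h s ≤ c + K * ∫ ζ in a..s, h ζ) :
    ∀ s ∈ Icc a b, h s ≤ c * Real.exp (K * (s - a)) := by
  set ψ : ℝ → ℝ := fun s => ∫ ζ in a..s, h ζ with hψ
  have hd : ∀ u : ℝ, HasDerivAt ψ (h u) u := by
    intro u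
    exact intervalIntegral.integral_hasDerivAt_right (hc.intervalIntegrable a u)
      hc.stronglyMeasurable.stronglyMeasurableAtFilter hc.continuousAt
  have hψc : Continuous ψ := by
    refine continuous_iff_continuousAt.mpr fun u => (hd u).continuousAt
  have hψ0 : ∀ s ∈ Icc a b, 0 ≤ ψ s := by
    intro s hs
    exact intervalIntegral.integral_nonneg hs.1 fun u hu => h0 u ⟨hu.1, le_trans hu.2 hs.2⟩
  have key := norm_le_gronwallBound_of_norm_deriv_right_le (f := ψ) (f' := h)
    (δ := 0) (K := K) (ε := c) (a := a) (b := b)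
    hψc.continuousOn (fun u _ => (hd u).hasDerivWithinAt)
    (by simp [hψ, intervalIntegral.integral_same]) ?_
  · intro s hs
    have h1 : h s ≤ c + K * ψ s := hineq s hs
    have h2 : ‖ψ s‖ ≤ gronwallBound 0 K c (s - a) := key s hs
    rw [Real.norm_eq_abs, abs_of_nonneg (hψ0 s hs)] at h2
    have h3 : c + K * gronwallBound 0 K c (s - a) ≤ c * Real.exp (K * (s - a)) := by
      rcases eq_or_lt_of_le hK with hK0 | hK0
      · rw [← hK0]
        simp [gronwallBound_K0]
      · simp only [gronwallBound_of_K_ne_0 hK0.ne']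
        have h4 : K * (0 * Real.exp (K * (s - a)) + c / K * (Real.exp (K * (s - a)) - 1))
            = c * (Real.exp (K * (s - a)) - 1) := by
          field_simp
          ring
        linarith [h4]

    calc h s ≤ c + K * ψ s := h1
      _ ≤ c + K * gronwallBound 0 K c (s - a) := by nlinarith [h2]
      _ ≤ c * Real.exp (K * (s - a)) := h3
  · intro u hu
    rw [Real.norm_eq_abs, abs_of_nonneg (h0 u ⟨hu.1, hu.2.le⟩), Real.norm_eq_abs,
      abs_of_nonneg (hψ0 u ⟨hu.1, hu.2.le⟩)]
    have := hineq u ⟨hu.1, hu.2.le⟩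
    linarith


/-- Comparison of two trajectories driven by the same control, started at
(possibly) different points and different initial times. -/
lemma traj_compare {d m : ℕ} {A : Set (EuclideanSpace ℝ (Fin m))}
    (F : EuclideanSpace ℝ (Fin d) → EuclideanSpace ℝ (Fin m) → EuclideanSpace ℝ (Fin d))
    (hFc : Continuous fun q : EuclideanSpace ℝ (Fin d) × EuclideanSpace ℝ (Fin m) => F q.1 q.2)
    {M L : ℝ} (hM : ∀ x a, ‖F x a‖ ≤ M)
    (hLip : ∀ x y a, a ∈ A → ‖F x a - F y a‖ ≤ L * ‖x - y‖)
    {α : ℝ → EuclideanSpace ℝ (Fin m)} (hα : Measurable α) (hαA : ∀ s, α s ∈ A)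
    {x y : EuclideanSpace ℝ (Fin d)} {t t' T : ℝ} (htt' : t ≤ t') (ht'T : t' ≤ T)
    {Y₁ Y₂ : ℝ → EuclideanSpace ℝ (Fin d)}
    (hY₁ : ∀ s, Y₁ s = x + ∫ ζ in t..s, F (Y₁ ζ) (α ζ))
    (hY₂ : ∀ s, Y₂ s = y + ∫ ζ in t'..s, F (Y₂ ζ) (α ζ)) :
    ∀ s ∈ Icc t' T, ‖Y₁ s - Y₂ s‖ ≤
      (‖x - y‖ + M * (t' - t)) * Real.exp (max L 0 * (s - t')) := by
  have hM0 : 0 ≤ M := le_trans (norm_nonneg _) (hM x (α t))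
  set proj : ℝ → ℝ := fun s => max t' (min s T) with hproj
  have hprojmem : ∀ s, proj s ∈ Icc t' T := by
    intro s
    constructor
    · exact le_max_left _ _
    · simp only [hproj, max_le_iff]
      exact ⟨ht'T, min_le_right _ _⟩
  have hprojid : ∀ s ∈ Icc t' T, proj s = s := by
    intro s hs
    simp only [hproj, min_eq_left hs.2, max_eq_right hs.1]
  have hprojc : Continuous proj := continuous_const.max (continuous_id.min continuous_const)
  set h : ℝ → ℝ := fun s => ‖Y₁ (proj s) - Y₂ (proj s)‖ with hh
  have hY₁c : ContinuousOn Y₁ (Ici t) := traj_cont F hFc hM hα hY₁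
  have hY₂c : ContinuousOn Y₂ (Ici t') := traj_cont F hFc hM hα hY₂
  have hhc : Continuous h := by
    have h1 : ContinuousOn (fun s => Y₁ (proj s) - Y₂ (proj s)) univ := by
      refine ContinuousOn.sub ?_ ?_
      · exact hY₁c.comp hprojc.continuousOn fun s _ =>
          le_trans htt' (hprojmem s).1
      · exact hY₂c.comp hprojc.continuousOn fun s _ => (hprojmem s).1
    exact (continuousOn_univ.mp h1).norm
  set c : ℝ := ‖x - y‖ + M * (t' - t) with hc
  have hc0 : 0 ≤ c := by
    have : 0 ≤ M * (t' - t) := mul_nonneg hM0 (by linarith)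
    positivity
  set K : ℝ := max L 0 with hK
  have hK0 : 0 ≤ K := le_max_right _ _
  have hint₁ := traj_intInt F hFc hM hα hY₁
  have hint₂ := traj_intInt F hFc hM hα hY₂
  have key : ∀ s ∈ Icc t' T, h s ≤ c + K * ∫ ζ in t'..s, h ζ := by
    intro s hs
    have hts : t ≤ s := le_trans htt' hs.1
    have heq : Y₁ s - Y₂ s = (x - y) + (∫ ζ in t..t', F (Y₁ ζ) (α ζ))
        + ∫ ζ in t'..s, (F (Y₁ ζ) (α ζ) - F (Y₂ ζ) (α ζ)) := by
      rw [intervalIntegral.integral_sub (hint₁ t' s (le_trans htt' le_rfl) hs.1)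
        (hint₂ t' s le_rfl hs.1)]
      rw [hY₁ s, hY₂ s,
        ← intervalIntegral.integral_add_adjacent_intervals (hint₁ t t' le_rfl htt')
          (hint₁ t' s htt' hs.1)]
      abel
    have hn1 : ‖∫ ζ in t..t', F (Y₁ ζ) (α ζ)‖ ≤ M * (t' - t) := by
      have := intervalIntegral.norm_integral_le_of_norm_le_const
        (C := M) (f := fun ζ => F (Y₁ ζ) (α ζ)) (a := t) (b := t') (fun ζ _ => hM _ _)
      rwa [abs_of_nonneg (by linarith)] at this
    have hn2 : ‖∫ ζ in t'..s, (F (Y₁ ζ) (α ζ) - F (Y₂ ζ) (α ζ))‖ ≤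
        ∫ ζ in t'..s, K * h ζ := by
      have hKh : IntervalIntegrable (fun ζ => K * h ζ) volume t' s :=
        (continuous_const.mul hhc).intervalIntegrable _ _
      have hb := intervalIntegral.norm_integral_le_abs_of_norm_le (μ := volume)
        (f := fun ζ => F (Y₁ ζ) (α ζ) - F (Y₂ ζ) (α ζ)) (g := fun ζ => K * h ζ)
        (a := t') (b := s) ?_ hKh
      · refine le_trans hb (le_of_eq (abs_of_nonneg ?_))
        refine intervalIntegral.integral_nonneg hs.1 fun u _ => ?_
        exact mul_nonneg hK0 (norm_nonneg _)
      · rw [Set.uIoc_of_le hs.1]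
        filter_upwards [ae_restrict_mem measurableSet_Ioc] with ζ hζ
        have hζmem : ζ ∈ Icc t' T := ⟨hζ.1.le, le_trans hζ.2 hs.2⟩
        have := hLip (Y₁ ζ) (Y₂ ζ) (α ζ) (hαA ζ)
        have hLK : L * ‖Y₁ ζ - Y₂ ζ‖ ≤ K * ‖Y₁ ζ - Y₂ ζ‖ :=
          mul_le_mul_of_nonneg_right (le_max_left _ _) (norm_nonneg _)
        have hco : h ζ = ‖Y₁ ζ - Y₂ ζ‖ := by rw [hh]; simp only [hprojid ζ hζmem]
        rw [hco]
        exact le_trans this hLK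
    have hs' : h s = ‖Y₁ s - Y₂ s‖ := by rw [hh]; simp only [hprojid s hs]
    rw [hs', heq]
    have tri : ‖(x - y) + (∫ ζ in t..t', F (Y₁ ζ) (α ζ))
        + ∫ ζ in t'..s, (F (Y₁ ζ) (α ζ) - F (Y₂ ζ) (α ζ))‖ ≤
        ‖x - y‖ + ‖∫ ζ in t..t', F (Y₁ ζ) (α ζ)‖
        + ‖∫ ζ in t'..s, (F (Y₁ ζ) (α ζ) - F (Y₂ ζ) (α ζ))‖ :=
      norm_add₃_le
    have hmul : ∫ ζ in t'..s, K * h ζ = K * ∫ ζ in t'..s, h ζ :=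
      intervalIntegral.integral_const_mul _ _
    rw [hmul] at hn2
    calc ‖(x - y) + (∫ ζ in t..t', F (Y₁ ζ) (α ζ))
        + ∫ ζ in t'..s, (F (Y₁ ζ) (α ζ) - F (Y₂ ζ) (α ζ))‖
        ≤ ‖x - y‖ + ‖∫ ζ in t..t', F (Y₁ ζ) (α ζ)‖
          + ‖∫ ζ in t'..s, (F (Y₁ ζ) (α ζ) - F (Y₂ ζ) (α ζ))‖ := tri
      _ ≤ c + K * ∫ ζ in t'..s, h ζ := by rw [hc]; linarith [hn1, hn2]
  have hfin := gronwall_int hhc hc0 hK0 (fun s _ => norm_nonneg _) key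
  intro s hs
  have h2 : ‖Y₁ (proj s) - Y₂ (proj s)‖ ≤ c * Real.exp (K * (s - t')) := hfin s hs
  rwa [hprojid s hs] at h2


/-- `|e^u - e^v| ≤ |u - v|` for nonpositive exponents. -/
lemma exp_diff_le {u v : ℝ} (hu : u ≤ 0) (hv : v ≤ 0) :
    |Real.exp u - Real.exp v| ≤ |u - v| := by
  have key : ∀ a b : ℝ, a ≤ b → b ≤ 0 → Real.exp b - Real.exp a ≤ b - a := by
    intro a b hab hb0
    have heq : Real.exp a = Real.exp b * Real.exp (a - b) := by
      rw [← Real.exp_add]; ring_nf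
    have h1 : a - b + 1 ≤ Real.exp (a - b) := Real.add_one_le_exp _
    have h2 : Real.exp b ≤ 1 := Real.exp_le_one_iff.mpr hb0
    nlinarith [Real.exp_pos b]
  rcases le_total u v with h | h
  · rw [abs_of_nonpos (by nlinarith [Real.exp_le_exp.mpr h]), abs_of_nonpos (by linarith)]
    have := key u v h hv
    linarith
  · rw [abs_of_nonneg (by nlinarith [Real.exp_le_exp.mpr h]), abs_of_nonneg (by linarith)]
    exact key v u h hu

/-- Interval integrability of the running-cost integrand. -/
lemma cost_intInt {d m N : ℕ} {lam : ℝ} (hlam : 0 ≤ lam)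
    (ℓ : EuclideanSpace ℝ (Fin d) → EuclideanSpace ℝ (Fin m) → (Fin N → Bool) → ℝ → ℝ)
    (p : Fin N → Bool)
    (hℓc : Continuous fun q : EuclideanSpace ℝ (Fin d) × EuclideanSpace ℝ (Fin m) × ℝ =>
      ℓ q.1 q.2.1 p q.2.2)
    {Kl : ℝ} (hℓ0 : ∀ x a s, 0 ≤ ℓ x a p s) (hKl : ∀ x a s, ℓ x a p s ≤ Kl)
    {Y : ℝ → EuclideanSpace ℝ (Fin d)} {t : ℝ} (hYc : ContinuousOn Y (Ici t))
    {α : ℝ → EuclideanSpace ℝ (Fin m)} (hα : Measurable α)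
    {a b : ℝ} (hta : t ≤ a) (hab : a ≤ b) :
    IntervalIntegrable (fun s => Real.exp (-lam * (s - t)) * ℓ (Y s) (α s) p s) volume a b := by
  rw [intervalIntegrable_iff_integrableOn_Ioc_of_le hab]
  have hIoc : Ioc a b ⊆ Ici t := fun s hs => le_trans hta hs.1.le
  have hYm : AEStronglyMeasurable Y (volume.restrict (Ioc a b)) :=
    (hYc.mono hIoc).aestronglyMeasurable measurableSet_Ioc
  have htriple : AEStronglyMeasurable
      (fun s => (Y s, α s, s) :
        ℝ → EuclideanSpace ℝ (Fin d) × EuclideanSpace ℝ (Fin m) × ℝ)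
      (volume.restrict (Ioc a b)) :=
    hYm.prodMk ((hα.aestronglyMeasurable.restrict).prodMk
      measurable_id.aestronglyMeasurable.restrict)
  have hlm : AEStronglyMeasurable (fun s => ℓ (Y s) (α s) p s)
      (volume.restrict (Ioc a b)) := hℓc.comp_aestronglyMeasurable htriple
  have hem : AEStronglyMeasurable (fun s => Real.exp (-lam * (s - t)))
      (volume.restrict (Ioc a b)) :=
    (Real.continuous_exp.comp (by continuity)).aestronglyMeasurable.restrict
  refine ⟨hem.mul hlm, ?_⟩
  refine MeasureTheory.HasFiniteIntegral.restrict_of_bounded (C := Kl) measure_Ioc_lt_top ?_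
  filter_upwards [ae_restrict_mem measurableSet_Ioc] with s hs
  have hs' : t ≤ s := le_trans hta hs.1.le
  have he1 : Real.exp (-lam * (s - t)) ≤ 1 := Real.exp_le_one_iff.mpr (by nlinarith)
  have he0 : 0 ≤ Real.exp (-lam * (s - t)) := (Real.exp_pos _).le
  rw [Real.norm_eq_abs, abs_of_nonneg (mul_nonneg he0 (hℓ0 _ _ _))]
  calc Real.exp (-lam * (s - t)) * ℓ (Y s) (α s) p s ≤ 1 * ℓ (Y s) (α s) p s :=
        mul_le_mul_of_nonneg_right he1 (hℓ0 _ _ _)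
    _ = ℓ (Y s) (α s) p s := one_mul _
    _ ≤ Kl := hKl _ _ _

/-- Crude bound for the running-cost integral. -/
lemma cost_norm_le {d m N : ℕ} {lam : ℝ} (hlam : 0 ≤ lam)
    (ℓ : EuclideanSpace ℝ (Fin d) → EuclideanSpace ℝ (Fin m) → (Fin N → Bool) → ℝ → ℝ)
    (p : Fin N → Bool)
    {Kl : ℝ} (hℓ0 : ∀ x a s, 0 ≤ ℓ x a p s) (hKl : ∀ x a s, ℓ x a p s ≤ Kl)
    {Y : ℝ → EuclideanSpace ℝ (Fin d)} {t : ℝ}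
    {α : ℝ → EuclideanSpace ℝ (Fin m)}
    {a b : ℝ} (hta : t ≤ a) (hab : a ≤ b) :
    |∫ s in a..b, Real.exp (-lam * (s - t)) * ℓ (Y s) (α s) p s| ≤ Kl * (b - a) := by
  have hbd : ∀ s ∈ Set.uIoc a b,
      ‖Real.exp (-lam * (s - t)) * ℓ (Y s) (α s) p s‖ ≤ Kl := by
    intro s hs
    rw [Set.uIoc_of_le hab] at hs
    have hs' : t ≤ s := le_trans hta hs.1.le
    have he1 : Real.exp (-lam * (s - t)) ≤ 1 := Real.exp_le_one_iff.mpr (by nlinarith)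
    have he0 : 0 ≤ Real.exp (-lam * (s - t)) := (Real.exp_pos _).le
    rw [Real.norm_eq_abs, abs_of_nonneg (mul_nonneg he0 (hℓ0 _ _ _))]
    calc Real.exp (-lam * (s - t)) * ℓ (Y s) (α s) p s ≤ 1 * ℓ (Y s) (α s) p s :=
        mul_le_mul_of_nonneg_right he1 (hℓ0 _ _ _)
      _ = ℓ (Y s) (α s) p s := one_mul _
      _ ≤ Kl := hKl _ _ _
  have h2 := intervalIntegral.norm_integral_le_of_norm_le_const hbd
  rw [Real.norm_eq_abs] at h2
  have habs : |b - a| = b - a := abs_of_nonneg (by linarith)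
  rw [habs] at h2
  exact h2

lemma pick_delta {c D r u : ℝ} (hc : 0 ≤ c) (hD : 1 ≤ D) (hr : 0 < r) (hu : 0 < u) :
    ∃ δ : ℝ, 0 < δ ∧ c * δ ≤ u ∧ δ * D < r ∧ δ < r := by
  have hD0 : 0 < D := by linarith
  refine ⟨min (u / (c + 1)) (r / (2 * D)),
    lt_min (by positivity) (by positivity), ?_, ?_, ?_⟩
  · have h1 : min (u / (c + 1)) (r / (2 * D)) ≤ u / (c + 1) := min_le_left _ _
    have h2 : c * (u / (c + 1)) ≤ u := by
      rw [mul_comm, div_mul_eq_mul_div, div_le_iff₀ (by linarith)]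
      nlinarith
    nlinarith [mul_le_mul_of_nonneg_left h1 hc]
  · have h1 : min (u / (c + 1)) (r / (2 * D)) ≤ r / (2 * D) := min_le_right _ _
    have h2 : (r / (2 * D)) * D = r / 2 := by
      field_simp
    nlinarith [mul_le_mul_of_nonneg_right h1 hD0.le]
  · have h1 : min (u / (c + 1)) (r / (2 * D)) ≤ r / (2 * D) := min_le_right _ _
    have h2 : r / (2 * D) ≤ r / 2 := by
      apply div_le_div_of_nonneg_left hr.le (by linarith) (by linarith)
    linarith

lemma abs4 (a b c d : ℝ) : |a + b + c - d| ≤ |a| + |b| + |c| + |d| := by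
  have h1 := abs_add_le (a + b) c
  have h2 := abs_add_le a b
  have h3 := abs_sub (a + b + c) d
  linarith

end Helpers


set_option maxHeartbeats 1000000 in
/-- The backwardly-defined value functions V_p of the family of
time-dependent optimal stopping problems are bounded and uniformly continuous on
ℝ^d × [0,T] for every p ∈ ℐ. -/
theorem stmt12
    {d m N : ℕ} (T lam : ℝ) (hT : 0 < T) (hlam : 0 ≤ lam)
    (A : Set (EuclideanSpace ℝ (Fin m))) (hA : IsCompact A) (hAne : A.Nonempty)
    (f : EuclideanSpace ℝ (Fin d) → EuclideanSpace ℝ (Fin m) → (Fin N → Bool) →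
      EuclideanSpace ℝ (Fin d))
    (hfc : ∀ p, Continuous fun q : EuclideanSpace ℝ (Fin d) × EuclideanSpace ℝ (Fin m) =>
      f q.1 q.2 p)
    (M : ℝ) (hfM : ∀ x a p, ‖f x a p‖ ≤ M)
    (L : ℝ) (hfLip : ∀ x y a p, a ∈ A → ‖f x a p - f y a p‖ ≤ L * ‖x - y‖)
    (ℓ : EuclideanSpace ℝ (Fin d) → EuclideanSpace ℝ (Fin m) → (Fin N → Bool) → ℝ → ℝ)
    (hℓ0 : ∀ x a p s, 0 ≤ ℓ x a p s) (hℓb : ∃ K, ∀ x a p s, ℓ x a p s ≤ K)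
    (hℓc : ∀ p, Continuous fun q : EuclideanSpace ℝ (Fin d) × EuclideanSpace ℝ (Fin m) × ℝ =>
      ℓ q.1 q.2.1 p q.2.2)
    (hℓuc : ∀ ε > 0, ∃ δ > 0, ∀ x y a p s, ‖x - y‖ < δ → |ℓ x a p s - ℓ y a p s| < ε)
    (C : EuclideanSpace ℝ (Fin d) → (Fin N → Bool) → (Fin N → Bool) → ℝ)
    (hC0 : ∀ x p p', 0 ≤ C x p p') (hCb : ∃ K, ∀ x p p', C x p p' ≤ K)
    (hCuc : ∀ ε > 0, ∃ δ > 0, ∀ x y p p', ‖x - y‖ < δ → |C x p p' - C y p p'| < ε)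
    (Y : (Fin N → Bool) → EuclideanSpace ℝ (Fin d) → ℝ → (ℝ → EuclideanSpace ℝ (Fin m)) →
      ℝ → EuclideanSpace ℝ (Fin d))
    (hY : ∀ p x t α s, Y p x t α s = x + ∫ ζ in t..s, f (Y p x t α ζ) (α ζ) p)
    (Vfam : (Fin N → Bool) → EuclideanSpace ℝ (Fin d) → ℝ → ℝ)
    (hVbar : ∀ x t, Vfam (fun _ => true) x t = 0)
    (hVfam : ∀ p : Fin N → Bool, p ≠ (fun _ => true) → ∀ x t, Vfam p x t =
      sInf {c | ∃ α ∈ Ctrl A, ∃ τ ∈ Icc t T, ∃ p' ∈ SwitchSet p,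
        c = (∫ s in t..τ, Real.exp (-lam * (s - t)) * ℓ (Y p x t α s) (α s) p s)
          + Real.exp (-lam * (τ - t)) *
              (C (Y p x t α τ) p p' + Vfam p' (Y p x t α τ) τ)})
    : ∀ p, BUCOn (Vfam p) T := by
  classical
  obtain ⟨Kl, hKl⟩ := hℓb
  obtain ⟨KC0, hKC0⟩ := hCb
  obtain ⟨a₀, ha₀⟩ := hAne
  have hM0 : 0 ≤ M := le_trans (norm_nonneg _) (hfM 0 a₀ (fun _ => true))
  have hKl0 : 0 ≤ Kl := le_trans (hℓ0 0 a₀ (fun _ => true) 0) (hKl 0 a₀ (fun _ => true) 0)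
  have hKC00 : 0 ≤ KC0 := le_trans (hC0 0 (fun _ => true) (fun _ => true))
    (hKC0 0 (fun _ => true) (fun _ => true))
  suffices H : ∀ n : ℕ, ∀ p : Fin N → Bool,
      (Finset.univ.filter fun i => p i = false).card = n → BUCOn (Vfam p) T by
    intro p
    exact H _ p rfl
  intro n
  induction n using Nat.strong_induction_on with
  | _ n IH =>
  intro p hpcard
  by_cases hpt : p = fun _ => true
  · -- base case : V ≡ 0
    subst hpt
    constructor
    · exact ⟨0, fun x t _ => by rw [hVbar]; simp⟩
    · rw [Metric.uniformContinuousOn_iff]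
      intro ε hε
      exact ⟨1, one_pos, fun q _ q' _ _ => by
        simp only [hVbar, dist_self]; exact hε⟩
  · -- inductive step
    have hl : ∃ l, p l = false := by
      by_contra hc
      push_neg at hc
      exact hpt (funext fun i => by
        rcases Bool.eq_false_or_eq_true (p i) with h | h
        · exact h
        · exact absurd h (hc i))
    obtain ⟨l, hl⟩ := hl
    -- switching decreases the number of unvisited targets
    have hswcard : ∀ q ∈ SwitchSet p,
        (Finset.univ.filter fun i => q i = false).card < n := by
      rintro q ⟨hq1, l₀, hl₀p, hl₀q⟩
      rw [← hpcard]
      apply Finset.card_lt_card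
      constructor
      · intro i hi
        simp only [Finset.mem_filter, Finset.mem_univ, true_and] at hi ⊢
        rcases Bool.eq_false_or_eq_true (p i) with h | h
        · rw [hq1 i h] at hi
          exact absurd hi (by simp)
        · exact h
      · intro hsub
        have : l₀ ∈ Finset.univ.filter fun i => q i = false :=
          hsub (by simp [hl₀p])
        simp only [Finset.mem_filter, Finset.mem_univ, true_and, hl₀q] at this
        exact absurd this (by simp)
    have hIH : ∀ q ∈ SwitchSet p, BUCOn (Vfam q) T :=
      fun q hq => IH _ (hswcard q hq) q rfl
    -- a uniform bound for the continuation values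
    have hKVfun : ∀ q : Fin N → Bool, ∃ KV : ℝ, 0 ≤ KV ∧
        (q ∈ SwitchSet p → ∀ x τ, τ ∈ Icc 0 T → |Vfam q x τ| ≤ KV) := by
      intro q
      by_cases hq : q ∈ SwitchSet p
      · obtain ⟨K, hK⟩ := (hIH q hq).1
        exact ⟨max K 0, le_max_right _ _,
          fun _ x τ hτ => le_trans (hK x τ hτ) (le_max_left _ _)⟩
      · exact ⟨0, le_rfl, fun h => absurd h hq⟩
    choose KVf hKVf0 hKVf using hKVfun
    have hne : (Finset.univ : Finset (Fin N → Bool)).Nonempty := Finset.univ_nonempty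
    set KV : ℝ := Finset.univ.sup' hne KVf with hKVdef
    have hKV : ∀ q ∈ SwitchSet p, ∀ (x : EuclideanSpace ℝ (Fin d)) τ, τ ∈ Icc 0 T →
        |Vfam q x τ| ≤ KV := fun q hq x τ hτ =>
      le_trans (hKVf q hq x τ hτ) (Finset.le_sup' KVf (Finset.mem_univ q))
    have hKV0 : 0 ≤ KV := le_trans (hKVf0 p) (Finset.le_sup' KVf (Finset.mem_univ p))
    -- the value is given by the optimal stopping formula
    have hV : ∀ (x : EuclideanSpace ℝ (Fin d)) (t : ℝ), Vfam p x t =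
        sInf {c | ∃ α ∈ Ctrl A, ∃ τ ∈ Icc t T, ∃ p' ∈ SwitchSet p,
          c = (∫ s in t..τ, Real.exp (-lam * (s - t)) * ℓ (Y p x t α s) (α s) p s)
            + Real.exp (-lam * (τ - t)) *
                (C (Y p x t α τ) p p' + Vfam p' (Y p x t α τ) τ)} := hVfam p hpt
    -- a canonical switching destination and a canonical control
    set q₀ : Fin N → Bool := Function.update p l true with hq₀def
    have hq₀ : q₀ ∈ SwitchSet p := by
      rw [hq₀def]
      refine ⟨fun i hi => ?_, l, hl, Function.update_self l true p⟩
      by_cases hil : i = l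
      · subst hil
        exact Function.update_self i true p
      · rw [Function.update_of_ne hil]
        exact hi
    have hα₀ : (fun _ : ℝ => a₀) ∈ Ctrl A := ⟨measurable_const, fun _ => ha₀⟩
    -- basic element of the admissible set
    have hmem0 : ∀ (x : EuclideanSpace ℝ (Fin d)) t, t ∈ Icc 0 T →
        (C x p q₀ + Vfam q₀ x t) ∈ {c | ∃ α ∈ Ctrl A, ∃ τ ∈ Icc t T, ∃ p' ∈ SwitchSet p,
          c = (∫ s in t..τ, Real.exp (-lam * (s - t)) * ℓ (Y p x t α s) (α s) p s)
            + Real.exp (-lam * (τ - t)) *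
                (C (Y p x t α τ) p p' + Vfam p' (Y p x t α τ) τ)} := by
      intro x t ht
      refine ⟨fun _ => a₀, hα₀, t, ⟨le_rfl, ht.2⟩, q₀, hq₀, ?_⟩
      have hYt : Y p x t (fun _ => a₀) t = x := by
        rw [hY]; simp
      rw [intervalIntegral.integral_same, hYt]
      simp
    -- every admissible cost is bounded below by `-KV`
    have hlb : ∀ (x : EuclideanSpace ℝ (Fin d)) t, t ∈ Icc 0 T →
        ∀ c ∈ {c | ∃ α ∈ Ctrl A, ∃ τ ∈ Icc t T, ∃ p' ∈ SwitchSet p,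
          c = (∫ s in t..τ, Real.exp (-lam * (s - t)) * ℓ (Y p x t α s) (α s) p s)
            + Real.exp (-lam * (τ - t)) *
                (C (Y p x t α τ) p p' + Vfam p' (Y p x t α τ) τ)}, -KV ≤ c := by
      rintro x t ht c ⟨α, hα, τ, hτ, p', hp', rfl⟩
      have hI : 0 ≤ ∫ s in t..τ, Real.exp (-lam * (s - t)) * ℓ (Y p x t α s) (α s) p s :=
        intervalIntegral.integral_nonneg hτ.1
          (fun s _ => mul_nonneg (Real.exp_pos _).le (hℓ0 _ _ _ _))
      have hτ0T : τ ∈ Icc 0 T := ⟨le_trans ht.1 hτ.1, hτ.2⟩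
      have hVb := hKV p' hp' (Y p x t α τ) τ hτ0T
      have hCx := hC0 (Y p x t α τ) p p'
      have hE1 : Real.exp (-lam * (τ - t)) ≤ 1 :=
        Real.exp_le_one_iff.mpr (by nlinarith [hτ.1])
      have hE0 : 0 < Real.exp (-lam * (τ - t)) := Real.exp_pos _
      have habs := abs_le.mp hVb
      nlinarith [mul_nonneg hE0.le (by linarith [habs.1] :
        (0:ℝ) ≤ C (Y p x t α τ) p p' + Vfam p' (Y p x t α τ) τ + KV),
        mul_le_of_le_one_left hKV0 hE1]
    constructor
    · -- boundedness
      refine ⟨KC0 + KV, fun x t ht => ?_⟩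
      rw [hV x t]
      have h1 := csInf_le ⟨-KV, hlb x t ht⟩ (hmem0 x t ht)
      have h2 := le_csInf ⟨_, hmem0 x t ht⟩ (hlb x t ht)
      have h3 : C x p q₀ + Vfam q₀ x t ≤ KC0 + KV := by
        have := abs_le.mp (hKV q₀ hq₀ x t ht)
        have := hKC0 x p q₀
        linarith [this]
      rw [abs_le]
      constructor
      · linarith
      · linarith
    · -- uniform continuity
      rw [Metric.uniformContinuousOn_iff]
      intro ε hε
      have hε8 : 0 < ε / 8 := by linarith
      have hT1 : 0 < T + 1 := by linarith
      have hε8T : 0 < ε / (8 * (T + 1)) := by positivity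
      obtain ⟨δl, hδl0, hδl⟩ := hℓuc (ε / (8 * (T + 1))) hε8T
      obtain ⟨δC, hδC0, hδC⟩ := hCuc (ε / 8) hε8
      -- a uniform modulus of continuity for the continuation values
      have hδVfun : ∀ q : Fin N → Bool, ∃ δ : ℝ, 0 < δ ∧
          (q ∈ SwitchSet p → ∀ (z w : EuclideanSpace ℝ (Fin d)) (τ τ' : ℝ),
            τ ∈ Icc 0 T → τ' ∈ Icc 0 T → ‖z - w‖ < δ → |τ - τ'| < δ →
            |Vfam q z τ - Vfam q w τ'| < ε / 8) := by
        intro q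
        by_cases hq : q ∈ SwitchSet p
        · have h2 := (hIH q hq).2
          rw [Metric.uniformContinuousOn_iff] at h2
          obtain ⟨δ, hδ0, hδ⟩ := h2 (ε / 8) hε8
          refine ⟨δ, hδ0, fun _ z w τ τ' hτ hτ' hzw hττ' => ?_⟩
          have h1 := hδ (z, τ) (Set.mem_prod.mpr ⟨trivial, hτ⟩) (w, τ')
            (Set.mem_prod.mpr ⟨trivial, hτ'⟩) (by
              rw [Prod.dist_eq]
              refine max_lt ?_ ?_
              · rwa [dist_eq_norm]
              · rwa [Real.dist_eq])
          rwa [Real.dist_eq] at h1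
        · exact ⟨1, one_pos, fun h => absurd h hq⟩
      choose δVf hδVf0 hδVf' using hδVfun
      set δV : ℝ := Finset.univ.inf' hne δVf with hδVdef
      have hδV0 : 0 < δV := (Finset.lt_inf'_iff hne).mpr fun q _ => hδVf0 q
      have hδV : ∀ q ∈ SwitchSet p, ∀ (z w : EuclideanSpace ℝ (Fin d)) (τ τ' : ℝ),
          τ ∈ Icc 0 T → τ' ∈ Icc 0 T → ‖z - w‖ < δV → |τ - τ'| < δV →
          |Vfam q z τ - Vfam q w τ'| < ε / 8 := by
        intro q hq z w τ τ' hτ hτ' h1 h2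
        have hle : δV ≤ δVf q := Finset.inf'_le δVf (Finset.mem_univ q)
        exact hδVf' q hq z w τ τ' hτ hτ' (lt_of_lt_of_le h1 hle) (lt_of_lt_of_le h2 hle)
      -- constants
      set eL : ℝ := Real.exp (max L 0 * T) with heLdef
      have hL'0 : (0:ℝ) ≤ max L 0 := le_max_right _ _
      have heL1 : 1 ≤ eL := by
        rw [heLdef]
        nlinarith [Real.add_one_le_exp (max L 0 * T), mul_nonneg hL'0 hT.le]
      set D : ℝ := 1 + 2 * M + (1 + M) * eL with hDdef
      have hD1 : 1 ≤ D := by nlinarith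
      set c1 : ℝ := 3 * Kl + lam * Kl * T + 2 * lam * (KC0 + KV) with hc1def
      have hc10 : 0 ≤ c1 := by
        have h1 : 0 ≤ lam * Kl * T := by positivity
        have h2 : 0 ≤ lam * (KC0 + KV) := mul_nonneg hlam (by linarith)
        nlinarith
      set δm : ℝ := min δl (min δC δV) with hδmdef
      have hδm0 : 0 < δm := lt_min hδl0 (lt_min hδC0 hδV0)
      have hδml : δm ≤ δl := min_le_left _ _
      have hδmC : δm ≤ δC := le_trans (min_le_right _ _) (min_le_left _ _)
      have hδmV : δm ≤ δV := le_trans (min_le_right _ _) (min_le_right _ _)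
      obtain ⟨δ, hδ0, hδc1, hδD, hδδm⟩ := pick_delta hc10 hD1 hδm0 hε8
      clear_value KV δV eL D c1 δm
      have hε''T : (ε / (8 * (T + 1))) * T ≤ ε / 8 := by
        rw [div_mul_eq_mul_div, div_le_div_iff₀ (by positivity) (by linarith)]
        nlinarith
      -- the key cost-comparison estimate
      have key : ∀ (x y : EuclideanSpace ℝ (Fin d)) (t t' : ℝ), t ∈ Icc 0 T → t' ∈ Icc 0 T →
          t ≤ t' → ‖x - y‖ < δ → t' - t < δ →
          ∀ α ∈ Ctrl A, ∀ τ ∈ Icc t T, ∀ τ' ∈ Icc t' T, |τ - τ'| ≤ t' - t →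
          ∀ p' ∈ SwitchSet p,
          |((∫ s in t..τ, Real.exp (-lam * (s - t)) * ℓ (Y p x t α s) (α s) p s)
              + Real.exp (-lam * (τ - t)) *
                  (C (Y p x t α τ) p p' + Vfam p' (Y p x t α τ) τ))
            - ((∫ s in t'..τ', Real.exp (-lam * (s - t')) * ℓ (Y p y t' α s) (α s) p s)
              + Real.exp (-lam * (τ' - t')) *
                  (C (Y p y t' α τ') p p' + Vfam p' (Y p y t' α τ') τ'))|
            ≤ 4 * (ε / 8) := by
        rintro x y t t' ht ht' htt' hxy htd α hαc τ hτ τ' hτ' hττ' p' hp'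
        obtain ⟨hαm, hαA⟩ := hαc
        have hFc : Continuous fun q : EuclideanSpace ℝ (Fin d) × EuclideanSpace ℝ (Fin m) =>
            f q.1 q.2 p := hfc p
        have hFM : ∀ z a, ‖f z a p‖ ≤ M := fun z a => hfM z a p
        have hY₁ : ∀ s, Y p x t α s = x + ∫ ζ in t..s, f (Y p x t α ζ) (α ζ) p :=
          fun s => hY p x t α s
        have hY₂ : ∀ s, Y p y t' α s = y + ∫ ζ in t'..s, f (Y p y t' α ζ) (α ζ) p :=
          fun s => hY p y t' α s
        have hc₁ : ContinuousOn (Y p x t α) (Ici t) := traj_cont _ hFc hFM hαm hY₁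
        have hc₂ : ContinuousOn (Y p y t' α) (Ici t') := traj_cont _ hFc hFM hαm hY₂
        have hlip₁ : ∀ s₁ s₂, t ≤ s₁ → s₁ ≤ s₂ →
            ‖Y p x t α s₂ - Y p x t α s₁‖ ≤ M * (s₂ - s₁) := traj_lip _ hFc hFM hαm hY₁
        have hlip₂ : ∀ s₁ s₂, t' ≤ s₁ → s₁ ≤ s₂ →
            ‖Y p y t' α s₂ - Y p y t' α s₁‖ ≤ M * (s₂ - s₁) := traj_lip _ hFc hFM hαm hY₂
        -- trajectory comparison
        have hcmp : ∀ s ∈ Icc t' T, ‖Y p x t α s - Y p y t' α s‖ < δ * (1 + M) * eL := by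
          intro s hs
          have h1 := traj_compare _ hFc hFM (fun z w a ha => hfLip z w a p ha)
            hαm hαA htt' ht'.2 hY₁ hY₂ s hs
          have hst' : s - t' ≤ T := by
            have := hs.2
            have := ht'.1
            linarith
          have he : Real.exp (max L 0 * (s - t')) ≤ eL := by
            rw [heLdef]
            exact Real.exp_le_exp.mpr (mul_le_mul_of_nonneg_left hst' hL'0)
          have hfront : ‖x - y‖ + M * (t' - t) < δ * (1 + M) := by
            have h2 := mul_le_mul_of_nonneg_left htd.le hM0
            have h3 : δ * (1 + M) = δ + M * δ := by ring
            linarith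
          have hfr0 : 0 ≤ ‖x - y‖ + M * (t' - t) := by
            have h2 := norm_nonneg (x - y)
            have h3 : 0 ≤ M * (t' - t) := mul_nonneg hM0 (by linarith)
            linarith
          calc ‖Y p x t α s - Y p y t' α s‖
              ≤ (‖x - y‖ + M * (t' - t)) * Real.exp (max L 0 * (s - t')) := h1
            _ < (δ * (1 + M)) * Real.exp (max L 0 * (s - t')) :=
                mul_lt_mul_of_pos_right hfront (Real.exp_pos _)
            _ ≤ δ * (1 + M) * eL := by
                have h0 : 0 ≤ δ * (1 + M) := mul_nonneg hδ0.le (by linarith)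
                exact mul_le_mul_of_nonneg_left he h0
        have hBD : δ * (1 + M) * eL ≤ δ * D := by
          rw [hDdef]
          have h1 : 0 ≤ δ * M := mul_nonneg hδ0.le hM0
          have h2 : δ * (1 + M) * eL = δ * (1 + 2 * M + (1 + M) * eL) - δ - 2 * (δ * M) := by
            ring
          linarith [hδ0.le]
        -- integrability and size of the running-cost integrals
        have hi₁ : ∀ a b, t ≤ a → a ≤ b → IntervalIntegrable
            (fun s => Real.exp (-lam * (s - t)) * ℓ (Y p x t α s) (α s) p s) volume a b :=
          fun a b h1 h2 => cost_intInt hlam ℓ p (hℓc p) (fun z a s => hℓ0 z a p s)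
            (fun z a s => hKl z a p s) hc₁ hαm h1 h2
        have hi₂ : ∀ a b, t' ≤ a → a ≤ b → IntervalIntegrable
            (fun s => Real.exp (-lam * (s - t')) * ℓ (Y p y t' α s) (α s) p s) volume a b :=
          fun a b h1 h2 => cost_intInt hlam ℓ p (hℓc p) (fun z a s => hℓ0 z a p s)
            (fun z a s => hKl z a p s) hc₂ hαm h1 h2
        have hn₁ : ∀ a b, t ≤ a → a ≤ b →
            |∫ s in a..b, Real.exp (-lam * (s - t)) * ℓ (Y p x t α s) (α s) p s|
              ≤ Kl * (b - a) :=
          fun a b h1 h2 => cost_norm_le hlam ℓ p (fun z a s => hℓ0 z a p s)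
            (fun z a s => hKl z a p s) h1 h2
        have hn₂ : ∀ a b, t' ≤ a → a ≤ b →
            |∫ s in a..b, Real.exp (-lam * (s - t')) * ℓ (Y p y t' α s) (α s) p s|
              ≤ Kl * (b - a) :=
          fun a b h1 h2 => cost_norm_le hlam ℓ p (fun z a s => hℓ0 z a p s)
            (fun z a s => hKl z a p s) h1 h2
        have hτ0 : τ ∈ Icc 0 T := ⟨le_trans ht.1 hτ.1, hτ.2⟩
        have hτ'0 : τ' ∈ Icc 0 T := ⟨le_trans ht'.1 hτ'.1, hτ'.2⟩
        have hττ'' : |τ' - τ| ≤ t' - t := by rwa [abs_sub_comm] at hττ'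
        -- distance between terminal positions
        have hYττ' : ‖Y p x t α τ - Y p y t' α τ'‖ < δ * D := by
          rcases le_or_gt t' τ with hcase | hcase
          · have h1 : ‖Y p x t α τ - Y p x t α τ'‖ ≤ M * (t' - t) := by
              rcases le_total τ τ' with h | h
              · have h2 := hlip₁ τ τ' hτ.1 h
                rw [← norm_neg]
                simp only [neg_sub]
                have h3 := abs_le.mp hττ''
                calc ‖Y p x t α τ' - Y p x t α τ‖ ≤ M * (τ' - τ) := h2
                  _ ≤ M * (t' - t) := mul_le_mul_of_nonneg_left (by linarith [h3.2]) hM0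
              · have h2 := hlip₁ τ' τ (le_trans htt' hτ'.1) h
                have h3 := abs_le.mp hττ'
                calc ‖Y p x t α τ - Y p x t α τ'‖ ≤ M * (τ - τ') := h2
                  _ ≤ M * (t' - t) := mul_le_mul_of_nonneg_left (by linarith [h3.2]) hM0
            have h2 := hcmp τ' hτ'
            have htri := dist_triangle (Y p x t α τ) (Y p x t α τ') (Y p y t' α τ')
            rw [dist_eq_norm, dist_eq_norm, dist_eq_norm] at htri
            have hMd : M * (t' - t) ≤ M * δ := mul_le_mul_of_nonneg_left htd.le hM0
            calc ‖Y p x t α τ - Y p y t' α τ'‖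
                ≤ ‖Y p x t α τ - Y p x t α τ'‖ + ‖Y p x t α τ' - Y p y t' α τ'‖ := htri
              _ < M * δ + δ * (1 + M) * eL := by linarith [h1, h2, hMd]
              _ ≤ δ * D := by
                  rw [hDdef]
                  have hp1 : 0 ≤ δ * M := mul_nonneg hδ0.le hM0
                  have hp2 : M * δ + δ * (1 + M) * eL
                      = δ * (1 + 2 * M + (1 + M) * eL) - δ - (δ * M) := by ring
                  linarith [hδ0.le]
          · have hY₁t : Y p x t α t = x := by rw [hY₁ t]; simp
            have hY₂t : Y p y t' α t' = y := by rw [hY₂ t']; simp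
            have h1 : ‖Y p x t α τ - x‖ ≤ M * (τ - t) := by
              have := hlip₁ t τ le_rfl hτ.1
              rwa [hY₁t] at this
            have h2 : ‖Y p y t' α τ' - y‖ ≤ M * (τ' - t') := by
              have := hlip₂ t' τ' le_rfl hτ'.1
              rwa [hY₂t] at this
            have hτ't' : τ' - t' ≤ t' - t := by
              have h3 := abs_le.mp hττ''
              linarith [h3.2, hcase.le]
            have hτt : τ - t ≤ t' - t := by linarith [hcase.le]
            have htri := dist_triangle4 (Y p x t α τ) x y (Y p y t' α τ')
            rw [dist_eq_norm, dist_eq_norm, dist_eq_norm, dist_eq_norm] at htri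
            have h4 : ‖y - Y p y t' α τ'‖ = ‖Y p y t' α τ' - y‖ := norm_sub_rev _ _
            calc ‖Y p x t α τ - Y p y t' α τ'‖
                ≤ ‖Y p x t α τ - x‖ + ‖x - y‖ + ‖y - Y p y t' α τ'‖ := htri
              _ < M * δ + δ + M * δ := by
                  rw [h4]
                  have hMd1 : M * (τ - t) ≤ M * δ :=
                    mul_le_mul_of_nonneg_left (by linarith) hM0
                  have hMd2 : M * (τ' - t') ≤ M * δ :=
                    mul_le_mul_of_nonneg_left (by linarith) hM0
                  linarith [h1, h2, hxy]
              _ ≤ δ * D := by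
                  rw [hDdef]
                  have hp1 : 0 ≤ δ * eL := mul_nonneg hδ0.le (by linarith)
                  have hp2 : 0 ≤ δ * (M * eL) :=
                    mul_nonneg hδ0.le (mul_nonneg hM0 (by linarith))
                  have hp3 : M * δ + δ + M * δ
                      = δ * (1 + 2 * M + (1 + M) * eL) - δ * eL - δ * (M * eL) := by ring
                  linarith
        have hYδm : ‖Y p x t α τ - Y p y t' α τ'‖ < δm := lt_of_lt_of_le hYττ' hδD.le
        -- difference of the discount factors at the terminal time
        have hEd : |Real.exp (-lam * (τ - t)) - Real.exp (-lam * (τ' - t'))|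
            ≤ 2 * lam * δ := by
          have hu0 : -lam * (τ - t) ≤ 0 := by
            have := mul_nonneg hlam (sub_nonneg.mpr hτ.1)
            linarith
          have hv0 : -lam * (τ' - t') ≤ 0 := by
            have := mul_nonneg hlam (sub_nonneg.mpr hτ'.1)
            linarith
          have h1 := exp_diff_le hu0 hv0
          refine le_trans h1 ?_
          rw [show (-lam * (τ - t)) - (-lam * (τ' - t')) = lam * ((τ' - t') - (τ - t)) by ring,
            abs_mul, abs_of_nonneg hlam]
          have h2 : |(τ' - t') - (τ - t)| ≤ |τ' - τ| + |t' - t| := by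
            rw [show (τ' - t') - (τ - t) = (τ' - τ) + (-(t' - t)) by ring]
            exact le_trans (abs_add_le _ _) (by rw [abs_neg])
          have h4 : |t' - t| = t' - t := abs_of_nonneg (by linarith)
          have h5 : |(τ' - t') - (τ - t)| ≤ 2 * δ := by
            rw [h4] at h2
            linarith [hττ'', htd.le]
          calc lam * |(τ' - t') - (τ - t)| ≤ lam * (2 * δ) :=
              mul_le_mul_of_nonneg_left h5 hlam
            _ = 2 * lam * δ := by ring
        -- terminal cost difference
        have hX₁ : |C (Y p x t α τ) p p' + Vfam p' (Y p x t α τ) τ| ≤ KC0 + KV := by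
          have h1 := abs_le.mp (hKV p' hp' (Y p x t α τ) τ hτ0)
          have h2 := hKC0 (Y p x t α τ) p p'
          have h3 := hC0 (Y p x t α τ) p p'
          rw [abs_le]
          constructor
          · linarith [h1.1]
          · linarith [h1.2]
        have hXd : |(C (Y p x t α τ) p p' + Vfam p' (Y p x t α τ) τ)
            - (C (Y p y t' α τ') p p' + Vfam p' (Y p y t' α τ') τ')| ≤ 2 * (ε / 8) := by
          have hCd := hδC (Y p x t α τ) (Y p y t' α τ') p p'
            (lt_of_lt_of_le hYδm hδmC)
          have hτV : |τ - τ'| < δV := by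
            have := abs_le.mp hττ'
            rw [abs_lt]
            constructor
            · linarith [this.1, htd, hδδm, hδmV]
            · linarith [this.2, htd, hδδm, hδmV]
          have hVd := hδV p' hp' (Y p x t α τ) (Y p y t' α τ') τ τ' hτ0 hτ'0
            (lt_of_lt_of_le hYδm hδmV) hτV
          rw [show (C (Y p x t α τ) p p' + Vfam p' (Y p x t α τ) τ)
              - (C (Y p y t' α τ') p p' + Vfam p' (Y p y t' α τ') τ')
              = (C (Y p x t α τ) p p' - C (Y p y t' α τ') p p')
                + (Vfam p' (Y p x t α τ) τ - Vfam p' (Y p y t' α τ') τ') by ring]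
          refine le_trans (abs_add_le _ _) ?_
          linarith [hCd.le, hVd.le]
        have hE₂1 : Real.exp (-lam * (τ' - t')) ≤ 1 := by
          refine Real.exp_le_one_iff.mpr ?_
          have := mul_nonneg hlam (sub_nonneg.mpr hτ'.1)
          linarith
        have hterm : |Real.exp (-lam * (τ - t)) *
              (C (Y p x t α τ) p p' + Vfam p' (Y p x t α τ) τ)
            - Real.exp (-lam * (τ' - t')) *
              (C (Y p y t' α τ') p p' + Vfam p' (Y p y t' α τ') τ')|
            ≤ 2 * lam * δ * (KC0 + KV) + 2 * (ε / 8) := by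
          rw [show Real.exp (-lam * (τ - t)) *
              (C (Y p x t α τ) p p' + Vfam p' (Y p x t α τ) τ)
            - Real.exp (-lam * (τ' - t')) *
              (C (Y p y t' α τ') p p' + Vfam p' (Y p y t' α τ') τ')
            = (Real.exp (-lam * (τ - t)) - Real.exp (-lam * (τ' - t')))
                * (C (Y p x t α τ) p p' + Vfam p' (Y p x t α τ) τ)
              + Real.exp (-lam * (τ' - t')) *
                ((C (Y p x t α τ) p p' + Vfam p' (Y p x t α τ) τ)
                  - (C (Y p y t' α τ') p p' + Vfam p' (Y p y t' α τ') τ')) by ring]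
          refine le_trans (abs_add_le _ _) ?_
          rw [abs_mul, abs_mul]
          have hb1 : |Real.exp (-lam * (τ - t)) - Real.exp (-lam * (τ' - t'))|
              * |C (Y p x t α τ) p p' + Vfam p' (Y p x t α τ) τ|
              ≤ (2 * lam * δ) * (KC0 + KV) :=
            mul_le_mul hEd hX₁ (abs_nonneg _)
              (by have := mul_nonneg hlam hδ0.le; linarith)
          have hb2 : |Real.exp (-lam * (τ' - t'))|
              * |(C (Y p x t α τ) p p' + Vfam p' (Y p x t α τ) τ)
                  - (C (Y p y t' α τ') p p' + Vfam p' (Y p y t' α τ') τ')|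
              ≤ 1 * (2 * (ε / 8)) := by
            rw [abs_of_nonneg (Real.exp_pos _).le]
            exact mul_le_mul hE₂1 hXd (abs_nonneg _) one_pos.le
          linarith [hb1, hb2]
        -- the running-cost part
        have hIpart : |(∫ s in t..τ, Real.exp (-lam * (s - t)) * ℓ (Y p x t α s) (α s) p s)
            - (∫ s in t'..τ', Real.exp (-lam * (s - t')) * ℓ (Y p y t' α s) (α s) p s)|
            ≤ 3 * Kl * δ + (lam * Kl * δ + ε / (8 * (T + 1))) * T := by
          have hpos0 : 0 ≤ lam * Kl * δ := mul_nonneg (mul_nonneg hlam hKl0) hδ0.le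
          have hposE : 0 ≤ ε / (8 * (T + 1)) := le_of_lt hε8T
          rcases le_or_gt t' τ with hcase | hcase
          · set σ := min τ τ' with hσdef
            have hσt' : t' ≤ σ := le_min hcase hτ'.1
            have htσ : t ≤ σ := le_trans htt' hσt'
            have hστ : σ ≤ τ := min_le_left _ _
            have hστ' : σ ≤ τ' := min_le_right _ _
            have hτσ : τ - σ ≤ t' - t := by
              rcases le_total τ τ' with h | h
              · rw [hσdef, min_eq_left h]
                linarith
              · rw [hσdef, min_eq_right h]
                have h3 := abs_le.mp hττ'
                linarith [h3.2]
            have hτ'σ : τ' - σ ≤ t' - t := by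
              rcases le_total τ τ' with h | h
              · rw [hσdef, min_eq_left h]
                have h3 := abs_le.mp hττ''
                linarith [h3.2]
              · rw [hσdef, min_eq_right h]
                linarith
            have hσT : σ ≤ T := le_trans hστ hτ.2
            have e1 := intervalIntegral.integral_add_adjacent_intervals
              (hi₁ t t' le_rfl htt') (hi₁ t' σ htt' hσt')
            have e2 := intervalIntegral.integral_add_adjacent_intervals
              (hi₁ t σ le_rfl htσ) (hi₁ σ τ htσ hστ)
            have e3 := intervalIntegral.integral_add_adjacent_intervals
              (hi₂ t' σ le_rfl hσt') (hi₂ σ τ' hσt' hστ')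
            have e4 : (∫ s in t'..σ, Real.exp (-lam * (s - t)) * ℓ (Y p x t α s) (α s) p s)
                - (∫ s in t'..σ, Real.exp (-lam * (s - t')) * ℓ (Y p y t' α s) (α s) p s)
                = ∫ s in t'..σ, (Real.exp (-lam * (s - t)) * ℓ (Y p x t α s) (α s) p s
                    - Real.exp (-lam * (s - t')) * ℓ (Y p y t' α s) (α s) p s) :=
              (intervalIntegral.integral_sub (hi₁ t' σ htt' hσt') (hi₂ t' σ le_rfl hσt')).symm
            have hmid : |∫ s in t'..σ, (Real.exp (-lam * (s - t)) * ℓ (Y p x t α s) (α s) p s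
                - Real.exp (-lam * (s - t')) * ℓ (Y p y t' α s) (α s) p s)|
                ≤ (lam * Kl * δ + ε / (8 * (T + 1))) * (σ - t') := by
              have hbd : ∀ s ∈ Set.uIoc t' σ,
                  ‖Real.exp (-lam * (s - t)) * ℓ (Y p x t α s) (α s) p s
                    - Real.exp (-lam * (s - t')) * ℓ (Y p y t' α s) (α s) p s‖
                  ≤ lam * Kl * δ + ε / (8 * (T + 1)) := by
                intro s hs
                rw [Set.uIoc_of_le hσt'] at hs
                have hsT : s ∈ Icc t' T := ⟨hs.1.le, le_trans hs.2 hσT⟩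
                have hst : t ≤ s := le_trans htt' hs.1.le
                have hYd := lt_of_lt_of_le (lt_of_lt_of_le (hcmp s hsT) hBD) hδD.le
                have hYδl : ‖Y p x t α s - Y p y t' α s‖ < δl := lt_of_lt_of_le hYd hδml
                have hld := hδl (Y p x t α s) (Y p y t' α s) (α s) p s hYδl
                have hu0 : -lam * (s - t) ≤ 0 := by
                  have := mul_nonneg hlam (sub_nonneg.mpr hst)
                  linarith
                have hv0 : -lam * (s - t') ≤ 0 := by
                  have := mul_nonneg hlam (sub_nonneg.mpr hs.1.le)
                  linarith
                have he := exp_diff_le hu0 hv0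
                have heq : |(-lam * (s - t)) - (-lam * (s - t'))| = lam * (t' - t) := by
                  rw [show (-lam * (s - t)) - (-lam * (s - t')) = -(lam * (t' - t)) by ring,
                    abs_neg, abs_of_nonneg (mul_nonneg hlam (by linarith))]
                rw [heq] at he
                rw [show Real.exp (-lam * (s - t)) * ℓ (Y p x t α s) (α s) p s
                    - Real.exp (-lam * (s - t')) * ℓ (Y p y t' α s) (α s) p s
                    = (Real.exp (-lam * (s - t)) - Real.exp (-lam * (s - t')))
                        * ℓ (Y p x t α s) (α s) p s
                      + Real.exp (-lam * (s - t')) *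
                        (ℓ (Y p x t α s) (α s) p s - ℓ (Y p y t' α s) (α s) p s) by ring]
                rw [Real.norm_eq_abs]
                refine le_trans (abs_add_le _ _) ?_
                rw [abs_mul, abs_mul]
                have hl1 : |ℓ (Y p x t α s) (α s) p s| ≤ Kl := by
                  rw [abs_of_nonneg (hℓ0 _ _ _ _)]
                  exact hKl _ _ _ _
                have hb1 : |Real.exp (-lam * (s - t)) - Real.exp (-lam * (s - t'))|
                    * |ℓ (Y p x t α s) (α s) p s| ≤ (lam * (t' - t)) * Kl :=
                  mul_le_mul he hl1 (abs_nonneg _) (mul_nonneg hlam (by linarith))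
                have hE1 : |Real.exp (-lam * (s - t'))| ≤ 1 := by
                  rw [abs_of_nonneg (Real.exp_pos _).le]
                  exact Real.exp_le_one_iff.mpr hv0
                have hb2 : |Real.exp (-lam * (s - t'))|
                    * |ℓ (Y p x t α s) (α s) p s - ℓ (Y p y t' α s) (α s) p s|
                    ≤ 1 * (ε / (8 * (T + 1))) :=
                  mul_le_mul hE1 hld.le (abs_nonneg _) one_pos.le
                have hlam1 : lam * (t' - t) * Kl ≤ lam * Kl * δ := by
                  have h8 : lam * (t' - t) * Kl = (lam * Kl) * (t' - t) := by ring
                  rw [h8]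
                  have h9 : (lam * Kl) * (t' - t) ≤ (lam * Kl) * δ :=
                    mul_le_mul_of_nonneg_left htd.le (mul_nonneg hlam hKl0)
                  linarith
                linarith [hb1, hb2, hlam1]
              have h5 := intervalIntegral.norm_integral_le_of_norm_le_const hbd
              rw [Real.norm_eq_abs] at h5
              have habs : |σ - t'| = σ - t' := abs_of_nonneg (by linarith)
              rw [habs] at h5
              exact h5
            have hdecomp : (∫ s in t..τ, Real.exp (-lam * (s - t)) * ℓ (Y p x t α s) (α s) p s)
                - (∫ s in t'..τ', Real.exp (-lam * (s - t')) * ℓ (Y p y t' α s) (α s) p s)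
                = (∫ s in t..t', Real.exp (-lam * (s - t)) * ℓ (Y p x t α s) (α s) p s)
                + (∫ s in t'..σ, (Real.exp (-lam * (s - t)) * ℓ (Y p x t α s) (α s) p s
                    - Real.exp (-lam * (s - t')) * ℓ (Y p y t' α s) (α s) p s))
                + (∫ s in σ..τ, Real.exp (-lam * (s - t)) * ℓ (Y p x t α s) (α s) p s)
                - (∫ s in σ..τ', Real.exp (-lam * (s - t')) * ℓ (Y p y t' α s) (α s) p s) := by
              rw [← e4, ← e2, ← e1, ← e3]
              ring
            rw [hdecomp]
            refine le_trans (abs4 _ _ _ _) ?_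
            have b1 := hn₁ t t' le_rfl htt'
            have b3 := hn₁ σ τ htσ hστ
            have b4 := hn₂ σ τ' hσt' hστ'
            have hKd1 : Kl * (t' - t) ≤ Kl * δ := mul_le_mul_of_nonneg_left htd.le hKl0
            have hKd3 : Kl * (τ - σ) ≤ Kl * δ :=
              mul_le_mul_of_nonneg_left (by linarith) hKl0
            have hKd4 : Kl * (τ' - σ) ≤ Kl * δ :=
              mul_le_mul_of_nonneg_left (by linarith) hKl0
            have hmid' : (lam * Kl * δ + ε / (8 * (T + 1))) * (σ - t')
                ≤ (lam * Kl * δ + ε / (8 * (T + 1))) * T := by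
              refine mul_le_mul_of_nonneg_left ?_ (by linarith)
              linarith [ht'.1]
            linarith [b1, b3, b4, hmid, hmid']
          · have hτ't' : τ' - t' ≤ t' - t := by
              have h3 := abs_le.mp hττ''
              linarith [h3.2]
            have b1 := hn₁ t τ le_rfl hτ.1
            have b2 := hn₂ t' τ' le_rfl hτ'.1
            have habs := abs_sub
              (∫ s in t..τ, Real.exp (-lam * (s - t)) * ℓ (Y p x t α s) (α s) p s)
              (∫ s in t'..τ', Real.exp (-lam * (s - t')) * ℓ (Y p y t' α s) (α s) p s)
            have hKd1 : Kl * (τ - t) ≤ Kl * δ :=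
              mul_le_mul_of_nonneg_left (by linarith) hKl0
            have hKd2 : Kl * (τ' - t') ≤ Kl * δ :=
              mul_le_mul_of_nonneg_left (by linarith) hKl0
            have hpos1 : 0 ≤ Kl * δ := mul_nonneg hKl0 hδ0.le
            have hpos2 : 0 ≤ (lam * Kl * δ + ε / (8 * (T + 1))) * T :=
              mul_nonneg (by linarith) hT.le
            have hb1' := (abs_nonneg _).trans b1
            have hb2' := (abs_nonneg _).trans b2
            linarith [b1, b2]
        -- assembling
        rw [show ((∫ s in t..τ, Real.exp (-lam * (s - t)) * ℓ (Y p x t α s) (α s) p s)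
              + Real.exp (-lam * (τ - t)) *
                  (C (Y p x t α τ) p p' + Vfam p' (Y p x t α τ) τ))
            - ((∫ s in t'..τ', Real.exp (-lam * (s - t')) * ℓ (Y p y t' α s) (α s) p s)
              + Real.exp (-lam * (τ' - t')) *
                  (C (Y p y t' α τ') p p' + Vfam p' (Y p y t' α τ') τ'))
            = ((∫ s in t..τ, Real.exp (-lam * (s - t)) * ℓ (Y p x t α s) (α s) p s)
              - (∫ s in t'..τ', Real.exp (-lam * (s - t')) * ℓ (Y p y t' α s) (α s) p s))
            + (Real.exp (-lam * (τ - t)) *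
                  (C (Y p x t α τ) p p' + Vfam p' (Y p x t α τ) τ)
              - Real.exp (-lam * (τ' - t')) *
                  (C (Y p y t' α τ') p p' + Vfam p' (Y p y t' α τ') τ')) by ring]
        refine le_trans (abs_add_le _ _) ?_
        have hsum : (3 * Kl * δ + (lam * Kl * δ + ε / (8 * (T + 1))) * T)
            + (2 * lam * δ * (KC0 + KV) + 2 * (ε / 8)) ≤ 4 * (ε / 8) := by
          have hexp : (3 * Kl * δ + (lam * Kl * δ + ε / (8 * (T + 1))) * T)
              + (2 * lam * δ * (KC0 + KV) + 2 * (ε / 8))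
              = c1 * δ + (ε / (8 * (T + 1))) * T + 2 * (ε / 8) := by
            rw [hc1def]
            ring
          rw [hexp]
          linarith [hδc1, hε''T]
        linarith [hIpart, hterm, hsum]
      -- one-sided comparison of the two values
      have oneside : ∀ (z w : EuclideanSpace ℝ (Fin d)) (s s' : ℝ),
          s ∈ Icc 0 T → s' ∈ Icc 0 T → s ≤ s' → ‖z - w‖ < δ → s' - s < δ →
          Vfam p w s' ≤ Vfam p z s + 5 * (ε / 8) ∧
            Vfam p z s ≤ Vfam p w s' + 5 * (ε / 8) := by
        intro z w s s' hs hs' hss' hzw hsd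
        have hwz : ‖w - z‖ < δ := by rwa [norm_sub_rev] at hzw
        have hbz : BddBelow {c | ∃ α ∈ Ctrl A, ∃ τ ∈ Icc s T, ∃ p' ∈ SwitchSet p,
            c = (∫ u in s..τ, Real.exp (-lam * (u - s)) * ℓ (Y p z s α u) (α u) p u)
              + Real.exp (-lam * (τ - s)) *
                  (C (Y p z s α τ) p p' + Vfam p' (Y p z s α τ) τ)} := ⟨-KV, hlb z s hs⟩
        have hbw : BddBelow {c | ∃ α ∈ Ctrl A, ∃ τ ∈ Icc s' T, ∃ p' ∈ SwitchSet p,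
            c = (∫ u in s'..τ, Real.exp (-lam * (u - s')) * ℓ (Y p w s' α u) (α u) p u)
              + Real.exp (-lam * (τ - s')) *
                  (C (Y p w s' α τ) p p' + Vfam p' (Y p w s' α τ) τ)} := ⟨-KV, hlb w s' hs'⟩
        have hnz : Set.Nonempty {c | ∃ α ∈ Ctrl A, ∃ τ ∈ Icc s T, ∃ p' ∈ SwitchSet p,
            c = (∫ u in s..τ, Real.exp (-lam * (u - s)) * ℓ (Y p z s α u) (α u) p u)
              + Real.exp (-lam * (τ - s)) *
                  (C (Y p z s α τ) p p' + Vfam p' (Y p z s α τ) τ)} := ⟨_, hmem0 z s hs⟩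
        have hnw : Set.Nonempty {c | ∃ α ∈ Ctrl A, ∃ τ ∈ Icc s' T, ∃ p' ∈ SwitchSet p,
            c = (∫ u in s'..τ, Real.exp (-lam * (u - s')) * ℓ (Y p w s' α u) (α u) p u)
              + Real.exp (-lam * (τ - s')) *
                  (C (Y p w s' α τ) p p' + Vfam p' (Y p w s' α τ) τ)} := ⟨_, hmem0 w s' hs'⟩
        constructor
        · -- V_p(w,s') ≤ V_p(z,s) + 5ε/8
          have hlt : sInf {c | ∃ α ∈ Ctrl A, ∃ τ ∈ Icc s T, ∃ p' ∈ SwitchSet p,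
              c = (∫ u in s..τ, Real.exp (-lam * (u - s)) * ℓ (Y p z s α u) (α u) p u)
                + Real.exp (-lam * (τ - s)) *
                    (C (Y p z s α τ) p p' + Vfam p' (Y p z s α τ) τ)}
              < Vfam p z s + ε / 8 := by
            rw [hV z s]
            linarith [hε8]
          obtain ⟨c, hcmem, hclt⟩ := (csInf_lt_iff hbz hnz).mp hlt
          obtain ⟨α, hαc, τ, hτm, p', hp', rfl⟩ := hcmem
          set τ'' : ℝ := max s' τ with hτ''def
          have hτ''m : τ'' ∈ Icc s' T := ⟨le_max_left _ _, max_le hs'.2 hτm.2⟩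
          have hττ'' : |τ - τ''| ≤ s' - s := by
            rcases le_total s' τ with h | h
            · rw [hτ''def, max_eq_right h, sub_self, abs_zero]
              linarith
            · rw [hτ''def, max_eq_left h, abs_of_nonpos (by linarith)]
              linarith [hτm.1]
          have hk := key z w s s' hs hs' hss' hzw hsd α hαc τ hτm τ'' hτ''m hττ'' p' hp'
          have hmem' : ((∫ u in s'..τ'', Real.exp (-lam * (u - s')) *
                ℓ (Y p w s' α u) (α u) p u)
              + Real.exp (-lam * (τ'' - s')) *
                  (C (Y p w s' α τ'') p p' + Vfam p' (Y p w s' α τ'') τ''))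
              ∈ {c | ∃ α ∈ Ctrl A, ∃ τ ∈ Icc s' T, ∃ p' ∈ SwitchSet p,
              c = (∫ u in s'..τ, Real.exp (-lam * (u - s')) * ℓ (Y p w s' α u) (α u) p u)
                + Real.exp (-lam * (τ - s')) *
                    (C (Y p w s' α τ) p p' + Vfam p' (Y p w s' α τ) τ)} :=
            ⟨α, hαc, τ'', hτ''m, p', hp', rfl⟩
          have h1 := csInf_le hbw hmem'
          have habs := abs_le.mp hk
          rw [hV w s']
          linarith [habs.1, habs.2]
        · -- V_p(z,s) ≤ V_p(w,s') + 5ε/8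
          have hlt : sInf {c | ∃ α ∈ Ctrl A, ∃ τ ∈ Icc s' T, ∃ p' ∈ SwitchSet p,
              c = (∫ u in s'..τ, Real.exp (-lam * (u - s')) * ℓ (Y p w s' α u) (α u) p u)
                + Real.exp (-lam * (τ - s')) *
                    (C (Y p w s' α τ) p p' + Vfam p' (Y p w s' α τ) τ)}
              < Vfam p w s' + ε / 8 := by
            rw [hV w s']
            linarith [hε8]
          obtain ⟨c, hcmem, hclt⟩ := (csInf_lt_iff hbw hnw).mp hlt
          obtain ⟨α, hαc, τ, hτm, p', hp', rfl⟩ := hcmem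
          have hτm' : τ ∈ Icc s T := ⟨le_trans hss' hτm.1, hτm.2⟩
          have hττ : |τ - τ| ≤ s' - s := by
            rw [sub_self, abs_zero]
            linarith
          have hk := key z w s s' hs hs' hss' hzw hsd α hαc τ hτm' τ hτm hττ p' hp'
          have hmem' : ((∫ u in s..τ, Real.exp (-lam * (u - s)) *
                ℓ (Y p z s α u) (α u) p u)
              + Real.exp (-lam * (τ - s)) *
                  (C (Y p z s α τ) p p' + Vfam p' (Y p z s α τ) τ))
              ∈ {c | ∃ α ∈ Ctrl A, ∃ τ ∈ Icc s T, ∃ p' ∈ SwitchSet p,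
              c = (∫ u in s..τ, Real.exp (-lam * (u - s)) * ℓ (Y p z s α u) (α u) p u)
                + Real.exp (-lam * (τ - s)) *
                    (C (Y p z s α τ) p p' + Vfam p' (Y p z s α τ) τ)} :=
            ⟨α, hαc, τ, hτm', p', hp', rfl⟩
          have h1 := csInf_le hbz hmem'
          have habs := abs_le.mp hk
          rw [hV z s]
          linarith [habs.1, habs.2]
      -- conclusion
      refine ⟨δ, hδ0, ?_⟩
      rintro ⟨x, t⟩ hq ⟨x', t'⟩ hq' hdist
      have ht : t ∈ Icc 0 T := hq.2
      have ht' : t' ∈ Icc 0 T := hq'.2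
      rw [Prod.dist_eq] at hdist
      have hxd : ‖x - x'‖ < δ := by
        have := lt_of_le_of_lt (le_max_left _ _) hdist
        rwa [dist_eq_norm] at this
      have htd2 : |t - t'| < δ := by
        have := lt_of_le_of_lt (le_max_right _ _) hdist
        rwa [Real.dist_eq] at this
      have hgoal : |Vfam p x t - Vfam p x' t'| < ε := by
        rcases le_total t t' with h | h
        · have h2 := abs_lt.mp htd2
          obtain ⟨h3, h4⟩ := oneside x x' t t' ht ht' h hxd (by linarith [h2.1])
          rw [abs_lt]
          constructor
          · linarith
          · linarith
        · have hx'd : ‖x' - x‖ < δ := by rwa [norm_sub_rev] at hxd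
          have h2 := abs_lt.mp htd2
          obtain ⟨h3, h4⟩ := oneside x' x t' t ht' ht h hx'd (by linarith [h2.2])
          rw [abs_lt]
          constructor
          · linarith
          · linarith
      show dist (Vfam p x t) (Vfam p x' t') < ε
      rwa [Real.dist_eq]


end
end
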